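/- arXiv:1406.0190 — 13 statements merged into one kernel-verified Lean document; each statement's English description precedes it below -/
import Mathlib

section
/- Let N and T be positive integers with 0 < 2T ≤ N, let θ = arcsin(√(T/N)), and let k = ⌊π/(4θ)⌋. Then (T/N)·(N/(N−T)) ≥ tan²(θ)·sin²(2kθ) ≥ (T/N)·(N/(N−T))·(1 − 2T/N)². -/
open Real

theorem stmt_1 (N T : ℕ) (hT : 0 < T) (h2T : 2 * T ≤ N)
    (θ : ℝ) (hθ : θ = Real.arcsin (Real.sqrt ((T : ℝ) / N)))
    (k : ℕ) (hk : k = ⌊Real.pi / (4 * θ)⌋₊) :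
    ((T : ℝ) / N) * ((N : ℝ) / ((N : ℝ) - T))
        ≥ Real.tan θ ^ 2 * Real.sin (2 * (k : ℝ) * θ) ^ 2
    ∧ Real.tan θ ^ 2 * Real.sin (2 * (k : ℝ) * θ) ^ 2
        ≥ ((T : ℝ) / N) * ((N : ℝ) / ((N : ℝ) - T)) * (1 - 2 * (T : ℝ) / N) ^ 2 := by
  have hNpos : 0 < N := by omega
  have hN : (0:ℝ) < N := by exact_mod_cast hNpos
  have hTR : (0:ℝ) < T := by exact_mod_cast hT
  have h2TR : 2 * (T:ℝ) ≤ N := by exact_mod_cast h2T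
  set x : ℝ := (T:ℝ) / N with hxdef
  have hx0 : 0 < x := div_pos hTR hN
  have hx2 : x ≤ 1/2 := by
    rw [hxdef, div_le_div_iff₀ hN (by norm_num)]
    linarith
  have hx1 : x < 1 := by linarith
  have hsx1 : Real.sqrt x ≤ 1 := by
    rw [show (1:ℝ) = Real.sqrt 1 by simp]
    exact Real.sqrt_le_sqrt (by linarith)
  have hsin : Real.sin θ = Real.sqrt x := by
    rw [hθ, Real.sin_arcsin (by linarith [Real.sqrt_nonneg x]) hsx1]
  have hcos : Real.cos θ = Real.sqrt (1 - x) := by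
    rw [hθ, Real.cos_arcsin, Real.sq_sqrt hx0.le]
  have hcospos : 0 < Real.cos θ := by
    rw [hcos]; exact Real.sqrt_pos.mpr (by linarith)
  have hsinsq : Real.sin θ ^ 2 = x := by rw [hsin, Real.sq_sqrt hx0.le]
  have hcossq : Real.cos θ ^ 2 = 1 - x := by rw [hcos, Real.sq_sqrt (by linarith)]
  have htan : Real.tan θ ^ 2 = x / (1 - x) := by
    rw [Real.tan_eq_sin_div_cos, div_pow, hsinsq, hcossq]
  have hθpos : 0 < θ := by
    rw [hθ]; exact Real.arcsin_pos.mpr (Real.sqrt_pos.mpr hx0)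
  -- θ ≤ π/4
  have hsqhalf : Real.sqrt (1/2) = Real.sin (π/4) := by
    rw [Real.sin_pi_div_four]
    rw [show (1/2 : ℝ) = (Real.sqrt 2 / 2)^2 by
      rw [div_pow, Real.sq_sqrt (by norm_num)]; norm_num]
    exact Real.sqrt_sq (by positivity)
  have hθle : θ ≤ π/4 := by
    rw [hθ]
    calc Real.arcsin (Real.sqrt x) ≤ Real.arcsin (Real.sqrt (1/2)) :=
          Real.monotone_arcsin (Real.sqrt_le_sqrt hx2)
      _ = π/4 := by
          rw [hsqhalf, Real.arcsin_sin (by linarith [Real.pi_pos]) (by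
            nlinarith [Real.pi_pos])]
  -- bounds on 2kθ
  have hfl : (k:ℝ) ≤ π / (4*θ) := by
    rw [hk]; exact Nat.floor_le (by positivity)
  have hfl2 : π / (4*θ) < (k:ℝ) + 1 := by
    rw [hk]; exact Nat.lt_floor_add_one _
  have h4θ : 0 < 4*θ := by linarith
  have hub : 2 * (k:ℝ) * θ ≤ π/2 := by
    have h1 : (k:ℝ) * (4*θ) ≤ π := (le_div_iff₀ h4θ).mp hfl
    linarith
  have hlb : π/2 - 2*θ ≤ 2 * (k:ℝ) * θ := by
    have h1 : π < ((k:ℝ) + 1) * (4*θ) := by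
      rw [← div_lt_iff₀ h4θ]; exact hfl2
    nlinarith
  -- sin(2kθ) ≥ cos(2θ)
  have hmono : Real.sin (π/2 - 2*θ) ≤ Real.sin (2 * (k:ℝ) * θ) := by
    apply Real.strictMonoOn_sin.monotoneOn
    · constructor <;> [linarith; linarith]
    · constructor
      · have : (0:ℝ) ≤ 2 * (k:ℝ) * θ := by positivity
        linarith [Real.pi_pos]
      · linarith
    · exact hlb
  have hcos2 : Real.sin (π/2 - 2*θ) = 1 - 2*x := by
    rw [Real.sin_pi_div_two_sub, Real.cos_two_mul, hcossq]; ring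
  have h12x : 0 ≤ 1 - 2*x := by linarith
  have hsin2k : 1 - 2*x ≤ Real.sin (2 * (k:ℝ) * θ) := by rw [← hcos2]; exact hmono
  have hsinsq2 : (1 - 2*x)^2 ≤ Real.sin (2 * (k:ℝ) * θ) ^ 2 := by
    apply pow_le_pow_left₀ h12x hsin2k
  have hNT : (0:ℝ) < (N:ℝ) - T := by linarith
  have hEq : ((T : ℝ) / N) * ((N : ℝ) / ((N : ℝ) - T)) = x / (1-x) := by
    rw [hxdef]; field_simp
  have hEq2 : 1 - 2 * (T:ℝ) / N = 1 - 2*x := by rw [hxdef]; ring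
  have htannn : 0 ≤ Real.tan θ ^ 2 := sq_nonneg _
  constructor
  · rw [ge_iff_le, hEq, ← htan]
    calc Real.tan θ ^ 2 * Real.sin (2 * (k:ℝ) * θ) ^ 2
        ≤ Real.tan θ ^ 2 * 1 :=
          mul_le_mul_of_nonneg_left (Real.sin_sq_le_one _) htannn
      _ = Real.tan θ ^ 2 := mul_one _
  · rw [ge_iff_le, hEq, hEq2, ← htan]
    exact mul_le_mul_of_nonneg_left hsinsq2 htannn
end

section
/- Let N and T be positive integers with 0 < 2T ≤ N, let θ = arcsin(√(T/N)), and let k = ⌊π/(4θ)⌋. Then 4·(T/N)·(1 − T/N) = sin²(2θ) ≥ cos²(2kθ) ≥ 0. -/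
open Real

theorem stmt_2 (N T : ℕ) (hT : 0 < T) (h2T : 2 * T ≤ N)
    (θ : ℝ) (hθ : θ = Real.arcsin (Real.sqrt ((T : ℝ) / N)))
    (k : ℕ) (hk : k = ⌊Real.pi / (4 * θ)⌋₊) :
    4 * ((T : ℝ) / N) * (1 - (T : ℝ) / N) = Real.sin (2 * θ) ^ 2
    ∧ Real.cos (2 * (k : ℝ) * θ) ^ 2 ≤ Real.sin (2 * θ) ^ 2
    ∧ 0 ≤ Real.cos (2 * (k : ℝ) * θ) ^ 2 := by
  have hN : (0:ℝ) < N := by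
    have : 0 < N := lt_of_lt_of_le (by omega) h2T
    exact_mod_cast this
  set t : ℝ := (T : ℝ) / N with ht
  have ht0 : 0 < t := div_pos (by exact_mod_cast hT) hN
  have ht2 : t ≤ 1 / 2 := by
    rw [div_le_div_iff₀ hN (by norm_num)]
    have : (2 * T : ℝ) ≤ N := by exact_mod_cast h2T
    linarith
  have ht1 : t ≤ 1 := by linarith
  have hst : Real.sqrt t ≤ 1 := by
    rw [show (1:ℝ) = Real.sqrt 1 by simp]
    exact Real.sqrt_le_sqrt ht1
  have hsin : Real.sin θ = Real.sqrt t := by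
    rw [hθ, Real.sin_arcsin (by linarith [Real.sqrt_nonneg t]) hst]
  have hcos : Real.cos θ = Real.sqrt (1 - t) := by
    rw [hθ, Real.cos_arcsin, Real.sq_sqrt ht0.le]
  have hθ0 : 0 < θ := by
    rw [hθ]; exact Real.arcsin_pos.2 (Real.sqrt_pos.2 ht0)
  have hπ := Real.pi_pos
  have hs12 : Real.sqrt (1/2) = Real.sqrt 2 / 2 := by
    rw [show (1:ℝ)/2 = (Real.sqrt 2 / 2)^2 by
      rw [div_pow, Real.sq_sqrt (by norm_num : (0:ℝ) ≤ 2)]; norm_num]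
    exact Real.sqrt_sq (by positivity)
  have hθ4 : θ ≤ Real.pi / 4 := by
    have h1 : θ ≤ Real.arcsin (Real.sqrt (1/2)) := by
      rw [hθ]
      exact Real.monotone_arcsin (Real.sqrt_le_sqrt ht2)
    have h2 : Real.arcsin (Real.sqrt (1/2)) = Real.pi / 4 := by
      rw [hs12, ← Real.sin_pi_div_four]
      exact Real.arcsin_sin (by linarith) (by linarith)
    linarith [h1, h2.le]
  -- first part
  have part1 : 4 * t * (1 - t) = Real.sin (2 * θ) ^ 2 := by
    rw [Real.sin_two_mul, hsin, hcos, mul_pow, mul_pow,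
      Real.sq_sqrt ht0.le, Real.sq_sqrt (by linarith : (0:ℝ) ≤ 1 - t)]
    ring
  -- bounds on k
  have hkc : (k : ℝ) = ⌊Real.pi / (4 * θ)⌋₊ := by exact_mod_cast congrArg Nat.cast hk
  have hku : (k : ℝ) ≤ Real.pi / (4 * θ) := by
    rw [hkc]; exact Nat.floor_le (by positivity)
  have hkl : Real.pi / (4 * θ) < (k : ℝ) + 1 := by
    rw [hkc]; exact Nat.lt_floor_add_one _
  have hub : 2 * (k : ℝ) * θ ≤ Real.pi / 2 := by
    have := (le_div_iff₀ (by linarith : (0:ℝ) < 4 * θ)).1 hku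
    nlinarith
  have hlb : Real.pi / 2 - 2 * θ ≤ 2 * (k : ℝ) * θ := by
    have := (div_lt_iff₀ (by linarith : (0:ℝ) < 4 * θ)).1 hkl
    nlinarith
  have hk0 : 0 ≤ 2 * (k : ℝ) * θ := by positivity
  have hcos0 : 0 ≤ Real.cos (2 * (k : ℝ) * θ) :=
    Real.cos_nonneg_of_mem_Icc ⟨by linarith, hub⟩
  have hcosle : Real.cos (2 * (k : ℝ) * θ) ≤ Real.sin (2 * θ) := by
    have h1 : Real.cos (2 * (k : ℝ) * θ) ≤ Real.cos (Real.pi / 2 - 2 * θ) := by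
      apply Real.cos_le_cos_of_nonneg_of_le_pi (by linarith) (by linarith) hlb
    rwa [Real.cos_pi_div_two_sub] at h1
  refine ⟨part1, ?_, by positivity⟩
  have hsin0 : 0 ≤ Real.sin (2 * θ) := le_trans hcos0 hcosle
  nlinarith
end

section
/- Let N and T be positive integers with 0 < T ≤ N, let θ = arcsin(√(T/N)), and let k = ⌊π/(4θ)⌋. Then cos²((2k+1)θ) ≤ T/N, and equivalently sin²((2k+1)θ) ≥ 1 − T/N. -/
open Real

theorem stmt_3 (N T : ℕ) (hT : 0 < T) (hTN : T ≤ N)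
    (θ : ℝ) (hθ : θ = Real.arcsin (Real.sqrt ((T : ℝ) / N)))
    (k : ℕ) (hk : k = ⌊Real.pi / (4 * θ)⌋₊) :
    Real.cos ((2 * (k : ℝ) + 1) * θ) ^ 2 ≤ (T : ℝ) / N
    ∧ Real.sin ((2 * (k : ℝ) + 1) * θ) ^ 2 ≥ 1 - (T : ℝ) / N := by
  have hN : 0 < N := lt_of_lt_of_le hT hTN
  have hs0 : (0 : ℝ) < (T : ℝ) / N := by
    apply div_pos <;> exact_mod_cast (by omega : (0:ℕ) < _)
  have hs1 : (T : ℝ) / N ≤ 1 := by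
    rw [div_le_one (by exact_mod_cast hN)]; exact_mod_cast hTN
  have hsqrt0 : 0 < Real.sqrt ((T : ℝ) / N) := Real.sqrt_pos.mpr hs0
  have hsqrt1 : Real.sqrt ((T : ℝ) / N) ≤ 1 := by
    rw [show (1:ℝ) = Real.sqrt 1 by simp]
    exact Real.sqrt_le_sqrt hs1
  have hθ0 : 0 < θ := by
    rw [hθ]; exact Real.arcsin_pos.mpr hsqrt0
  have hθ2 : θ ≤ Real.pi / 2 := hθ ▸ Real.arcsin_le_pi_div_two _
  have hsin : Real.sin θ = Real.sqrt ((T : ℝ) / N) := by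
    rw [hθ, Real.sin_arcsin (by linarith) hsqrt1]
  have hsinsq : Real.sin θ ^ 2 = (T : ℝ) / N := by
    rw [hsin, Real.sq_sqrt hs0.le]
  have h4θ : 0 < 4 * θ := by linarith
  have hk1 : (k : ℝ) ≤ Real.pi / (4 * θ) := by
    rw [hk]; exact Nat.floor_le (by positivity)
  have hk2 : Real.pi / (4 * θ) < (k : ℝ) + 1 := by
    rw [hk]; exact Nat.lt_floor_add_one _
  have hupper : (2 * (k : ℝ) + 1) * θ ≤ Real.pi / 2 + θ := by
    have := (le_div_iff₀ h4θ).mp hk1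
    nlinarith
  have hlower : Real.pi / 2 - θ < (2 * (k : ℝ) + 1) * θ := by
    have := (div_lt_iff₀ h4θ).mp hk2
    nlinarith
  set φ := (2 * (k : ℝ) + 1) * θ with hφ
  have hφ0 : 0 ≤ φ := by positivity
  have hφπ : φ ≤ Real.pi := by
    have := Real.pi_pos; linarith
  have hc1 : Real.cos φ ≤ Real.sin θ := by
    have := Real.cos_le_cos_of_nonneg_of_le_pi (by linarith) hφπ hlower.le
    rwa [Real.cos_pi_div_two_sub] at this
  have hc2 : -Real.sin θ ≤ Real.cos φ := by
    have hπ2θ : Real.pi / 2 + θ ≤ Real.pi := by linarith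
    have := Real.cos_le_cos_of_nonneg_of_le_pi hφ0 hπ2θ hupper
    rw [Real.cos_add] at this; simp at this; linarith
  have hcsq : Real.cos φ ^ 2 ≤ (T : ℝ) / N := by
    rw [← hsinsq]
    exact sq_le_sq' hc2 hc1
  refine ⟨hcsq, ?_⟩
  have := Real.sin_sq_add_cos_sq φ
  linarith
end

section
/- Let N ≥ 1, M ≥ 1 and L ≥ 0 be integers, let T = L + M, let ω = exp(−2πi/N), let s, P, y be integers with N ∤ y and N ∤ P·y. Then (1/N^L)·∑_{(z_1,…,z_L) ∈ {0,…,N−1}^L} |(1/T)·ω^{s·y}·(1 − ω^{M·P·y})/(1 − ω^{P·y}) + (1/T)·∑_{j=1}^{L} ω^{z_j·y}|² = (1/T²)·sin²(π·M·P·y/N)/sin²(π·P·y/N) + L/T², and this value is at most (M² + L)/(M + L)². -/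
open Real Complex


private lemma abs_sin_nat_mul (x : ℝ) : ∀ n : ℕ, |Real.sin (n * x)| ≤ n * |Real.sin x|
  | 0 => by simp
  | (n+1) => by
    have h := abs_sin_nat_mul x n
    have e : ((n:ℝ)+1) * x = n*x + x := by ring
    push_cast
    rw [e, Real.sin_add]
    have h1 : |Real.sin (n*x) * Real.cos x + Real.cos (n*x) * Real.sin x|
        ≤ |Real.sin (n*x) * Real.cos x| + |Real.cos (n*x) * Real.sin x| := abs_add_le _ _
    rw [abs_mul, abs_mul] at h1
    nlinarith [Real.abs_cos_le_one x, Real.abs_cos_le_one (n*x), abs_nonneg (Real.sin x),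
      abs_nonneg (Real.sin (n*x)), abs_nonneg (Real.cos x), abs_nonneg (Real.cos (n*x))]

private lemma sum_normSq_row {N : ℕ} {ζ : ℂ} (hζa : ∀ a : ℕ, Complex.normSq (ζ ^ a) = 1)
    (hζs : ∑ a : Fin N, ζ ^ (a : ℕ) = 0) (B c : ℂ) :
    ∑ a : Fin N, Complex.normSq (B + c * ζ ^ (a : ℕ))
      = N * Complex.normSq B + N * Complex.normSq c := by
  have : ∀ a : Fin N, Complex.normSq (B + c * ζ ^ (a:ℕ))
      = Complex.normSq B + Complex.normSq c
        + 2 * (B * (starRingEnd ℂ) c * (starRingEnd ℂ) (ζ ^ (a:ℕ))).re := by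
    intro a
    rw [Complex.normSq_add]
    simp [Complex.normSq_mul, hζa, mul_assoc]
  rw [Finset.sum_congr rfl (fun a _ => this a)]
  have h2 : ∑ a : Fin N, (B * (starRingEnd ℂ) c * (starRingEnd ℂ) (ζ ^ (a:ℕ))).re
      = (B * (starRingEnd ℂ) c * (starRingEnd ℂ) (∑ a : Fin N, ζ ^ (a:ℕ))).re := by
    rw [map_sum, Finset.mul_sum, Complex.re_sum]
  rw [Finset.sum_add_distrib, Finset.sum_add_distrib, ← Finset.mul_sum, h2, hζs]
  simp [mul_comm]

private lemma sum_normSq_key {N : ℕ} {ζ : ℂ} (hζa : ∀ a : ℕ, Complex.normSq (ζ ^ a) = 1)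
    (hζs : ∑ a : Fin N, ζ ^ (a : ℕ) = 0) :
    ∀ (L : ℕ) (A c : ℂ),
      ∑ z : Fin L → Fin N, Complex.normSq (A + c * ∑ j : Fin L, ζ ^ ((z j : ℕ)))
        = N ^ L * (Complex.normSq A + L * Complex.normSq c)
  | 0, A, c => by simp
  | (L+1), A, c => by
    rw [← (Fin.consEquiv (fun _ => Fin N)).sum_comp, Fintype.sum_prod_type]
    have step : ∀ (a : Fin N) (w : Fin L → Fin N),
        (A + c * ∑ j : Fin (L+1), ζ ^ ((((Fin.consEquiv (fun _ => Fin N)) (a, w)) j : ℕ)))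
        = (A + c * ∑ j : Fin L, ζ ^ ((w j : ℕ))) + c * ζ ^ (a : ℕ) := by
      intro a w
      rw [Fin.sum_univ_succ]
      simp [Fin.consEquiv]
      ring
    rw [Finset.sum_comm]
    have : ∀ w : Fin L → Fin N,
        ∑ a : Fin N, Complex.normSq (A + c * ∑ j : Fin (L+1), ζ ^ ((((Fin.consEquiv (fun _ => Fin N)) (a, w)) j : ℕ)))
        = N * Complex.normSq (A + c * ∑ j : Fin L, ζ ^ ((w j : ℕ))) + N * Complex.normSq c := by
      intro w
      rw [Finset.sum_congr rfl (fun a _ => by rw [step a w])]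
      exact sum_normSq_row hζa hζs _ c
    rw [Finset.sum_congr rfl (fun w _ => this w), Finset.sum_add_distrib, ← Finset.mul_sum,
      sum_normSq_key hζa hζs L A c]
    simp [Finset.card_univ]
    push_cast
    ring

theorem stmt_9 (N M L : ℕ) (hN : 1 ≤ N) (hM : 1 ≤ M) (T : ℕ) (hT : T = L + M)
    (ω : ℂ) (hω : ω = Complex.exp (-2 * Real.pi * Complex.I / N))
    (s P y : ℤ) (hy : ¬ (N : ℤ) ∣ y) (hPy : ¬ (N : ℤ) ∣ P * y) :
    (1 / (N : ℝ) ^ L) * ∑ z : Fin L → Fin N,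
        ‖(1 / (T : ℂ)) * ω ^ (s * y) *
            ((1 - ω ^ ((M : ℤ) * (P * y))) / (1 - ω ^ (P * y)))
          + (1 / (T : ℂ)) * ∑ j : Fin L, ω ^ (((z j : ℕ) : ℤ) * y)‖ ^ 2
      = (1 / (T : ℝ) ^ 2) *
          (Real.sin (Real.pi * M * P * y / N) ^ 2 / Real.sin (Real.pi * P * y / N) ^ 2)
        + (L : ℝ) / (T : ℝ) ^ 2
    ∧ (1 / (T : ℝ) ^ 2) *
          (Real.sin (Real.pi * M * P * y / N) ^ 2 / Real.sin (Real.pi * P * y / N) ^ 2)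
        + (L : ℝ) / (T : ℝ) ^ 2
      ≤ ((M : ℝ) ^ 2 + L) / ((M : ℝ) + L) ^ 2 := by
  have hN0 : (N:ℝ) ≠ 0 := by positivity
  have hpow : ∀ m : ℤ, ω ^ m = Complex.exp (((-2 * π * m / N : ℝ) : ℂ) * I) := by
    intro m
    rw [hω, ← Complex.exp_int_mul]
    congr 1
    push_cast
    ring
  have hnormSq : ∀ m : ℤ, Complex.normSq (1 - ω ^ m) = 4 * Real.sin (π * m / N) ^ 2 := by
    intro m
    rw [hpow m]
    set θ : ℝ := -2 * π * m / N with hθ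
    have h1 : (1 : ℂ) - Complex.exp (↑θ * I)
        = Complex.ofReal (1 - Real.cos θ) + Complex.ofReal (- Real.sin θ) * I := by
      rw [Complex.exp_mul_I, ← Complex.ofReal_cos, ← Complex.ofReal_sin]
      push_cast; ring
    rw [h1, Complex.normSq_add_mul_I]
    have h2 : Real.sin (π * m / N) = - Real.sin (θ/2) := by
      rw [show (θ/2 : ℝ) = -(π * m / N) by rw [hθ]; ring, Real.sin_neg, neg_neg]
    have h3 := Real.cos_two_mul (θ/2)
    have h4 := Real.sin_sq_add_cos_sq (θ/2)
    rw [show (2 * (θ/2) : ℝ) = θ by ring] at h3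
    rw [h2]
    nlinarith [Real.sin_sq_add_cos_sq θ, h3, h4]
  have habs1 : ∀ m : ℤ, Complex.normSq (ω ^ m) = 1 := by
    intro m
    rw [hpow m, Complex.normSq_eq_norm_sq, Complex.norm_exp]
    simp
  have hne1 : ∀ m : ℤ, ¬ (N:ℤ) ∣ m → ω ^ m ≠ 1 := by
    intro m hm h
    rw [hpow, Complex.exp_eq_one_iff] at h
    obtain ⟨n, hn⟩ := h
    have him := congrArg Complex.im hn
    simp at him
    apply hm
    refine ⟨-n, ?_⟩
    have : (m : ℝ) = ((N:ℤ) * (-n) : ℤ) := by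
      push_cast
      have hπ : (2*π : ℝ) ≠ 0 := by positivity
      field_simp at him
      linear_combination -him
    exact_mod_cast this
  have hsinne : Real.sin (π * (P*y) / N) ≠ 0 := by
    intro h
    rw [Real.sin_eq_zero_iff] at h
    obtain ⟨n, hn⟩ := h
    apply hPy
    refine ⟨n, ?_⟩
    have : ((P*y : ℤ) : ℝ) = ((N:ℤ) * n : ℤ) := by
      push_cast
      have hπ : (π : ℝ) ≠ 0 := Real.pi_ne_zero
      field_simp at hn
      linear_combination -hn
    exact_mod_cast this
  have hζs : ∑ a : Fin N, (ω ^ y) ^ (a : ℕ) = 0 := by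
    rw [Fin.sum_univ_eq_sum_range (fun a => (ω ^ y) ^ a) N,
      geom_sum_eq (hne1 y hy) N]
    have : (ω ^ y) ^ N = 1 := by
      rw [hpow y, ← Complex.exp_nat_mul, Complex.exp_eq_one_iff]
      refine ⟨-y, ?_⟩
      have hNC : (N:ℂ) ≠ 0 := Nat.cast_ne_zero.mpr (by omega)
      push_cast
      field_simp
    rw [this]
    simp
  have hcoord : ∀ n : ℕ, ω ^ ((n:ℤ) * y) = (ω ^ y) ^ n := by
    intro n
    rw [hpow, hpow y, ← Complex.exp_nat_mul]
    congr 1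
    push_cast
    ring
  have hζa : ∀ a : ℕ, Complex.normSq ((ω ^ y) ^ a) = 1 := by
    intro a
    rw [map_pow, habs1 y, one_pow]
  have hT0 : (T:ℝ) ≠ 0 := Nat.cast_ne_zero.mpr (by omega)
  have hc2 : Complex.normSq (1/(T:ℂ)) = 1/(T:ℝ)^2 := by
    rw [map_div₀, map_one, Complex.normSq_natCast]
    norm_num [pow_two]
  have hA : Complex.normSq ((1 / (T : ℂ)) * ω ^ (s * y) *
        ((1 - ω ^ ((M : ℤ) * (P * y))) / (1 - ω ^ (P * y))))
      = (1 / (T : ℝ) ^ 2) *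
        (Real.sin (π * M * P * y / N) ^ 2 / Real.sin (π * P * y / N) ^ 2) := by
    have h1 := hnormSq ((M:ℤ) * (P*y))
    have h2 := hnormSq (P*y)
    rw [show (π * (((M:ℤ) * (P*y) : ℤ) : ℝ) / N) = π * M * P * y / N by push_cast; ring] at h1
    rw [show (π * (((P*y : ℤ)) : ℝ) / N) = π * P * y / N by push_cast; ring] at h2
    rw [Complex.normSq_mul, Complex.normSq_mul, hc2, habs1, Complex.normSq_div, h1, h2,
      mul_div_mul_left _ _ (by norm_num : (4:ℝ) ≠ 0)]
    ring
  have hsinne' : Real.sin (π * (P:ℝ) * y / N) ≠ 0 := by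
    rw [show π * (P:ℝ) * y / N = π * ((P:ℝ)*y)/N by ring]
    exact_mod_cast hsinne
  constructor
  · have hrw : ∀ z : Fin L → Fin N,
        ‖(1 / (T : ℂ)) * ω ^ (s * y) *
            ((1 - ω ^ ((M : ℤ) * (P * y))) / (1 - ω ^ (P * y)))
          + (1 / (T : ℂ)) * ∑ j : Fin L, ω ^ (((z j : ℕ) : ℤ) * y)‖ ^ 2
        = Complex.normSq (((1 / (T : ℂ)) * ω ^ (s * y) *
            ((1 - ω ^ ((M : ℤ) * (P * y))) / (1 - ω ^ (P * y))))
          + (1 / (T : ℂ)) * ∑ j : Fin L, (ω ^ y) ^ ((z j : ℕ))) := by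
      intro z
      rw [Complex.sq_norm]
      simp only [hcoord]
    rw [Finset.sum_congr rfl fun z _ => hrw z,
      sum_normSq_key hζa hζs L _ (1/(T:ℂ))]
    have hNL : ((N:ℝ))^L ≠ 0 := by positivity
    rw [← mul_assoc, one_div, inv_mul_cancel₀ hNL, one_mul, hA, hc2]
    ring
  · have hm := abs_sin_nat_mul (π * (P:ℝ) * y / N) M
    have hs2 : Real.sin (π * (M:ℝ) * P * y / N)^2 ≤ (M:ℝ)^2 * Real.sin (π*(P:ℝ)*y/N)^2 := by
      rw [show π * (M:ℝ) * P * y / N = M * (π * (P:ℝ) * y / N) by ring]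
      nlinarith [hm, _root_.sq_abs (Real.sin ((M:ℝ) * (π*(P:ℝ)*y/N))), _root_.sq_abs (Real.sin (π*(P:ℝ)*y/N)),
        abs_nonneg (Real.sin (π*(P:ℝ)*y/N)), abs_nonneg (Real.sin ((M:ℝ)*(π*(P:ℝ)*y/N)))]
    have hsq : (0:ℝ) < Real.sin (π*(P:ℝ)*y/N)^2 := pow_two_pos_of_ne_zero hsinne'
    have hdiv : Real.sin (π*(M:ℝ)*P*y/N)^2 / Real.sin (π*(P:ℝ)*y/N)^2 ≤ (M:ℝ)^2 := by
      rw [div_le_iff₀ hsq]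
      exact hs2
    have hTLM : (T:ℝ) = (M:ℝ) + L := by rw [hT]; push_cast; ring
    rw [hTLM]
    have hM1 : (1:ℝ) ≤ M := by exact_mod_cast hM
    have hden : (0:ℝ) < ((M:ℝ) + L)^2 := by positivity
    rw [show (1/((M:ℝ)+L)^2) * (Real.sin (π*(M:ℝ)*P*y/N)^2 / Real.sin (π*(P:ℝ)*y/N)^2)
        + (L:ℝ)/((M:ℝ)+L)^2
        = (Real.sin (π*(M:ℝ)*P*y/N)^2 / Real.sin (π*(P:ℝ)*y/N)^2 + L)/((M:ℝ)+L)^2 by ring]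
    gcongr
end

section
/- Let N ≥ 1 and L ≥ 0 be integers, let ω = exp(−2πi/N), let y be an integer with N ∤ y and N ∤ 2·y, let s be any integer, and let a, b be real numbers. Then the variance over all N^L tuples (z_1,…,z_L) with each z_j ∈ {0,1,…,N−1} of the random quantity X = |a·ω^{s·y} + b·∑_{j=1}^{L} ω^{z_j·y}|² equals b⁴·(L² − L) + 2·a²·b²·L. -/
open Real Complex Finset

section aux
variable {N L : ℕ}

noncomputable def hh (ζ : ℂ) (z : Fin L → Fin N) (c : Fin L → ℤ) : ℂ :=
  ∏ j, ζ ^ ((z j : ℤ) * c j)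

lemma hh_add {ζ : ℂ} (hζ : ζ ≠ 0) (z : Fin L → Fin N) (c d : Fin L → ℤ) :
    hh ζ z (c + d) = hh ζ z c * hh ζ z d := by
  simp [hh, ← Finset.prod_mul_distrib, mul_add, zpow_add₀ hζ]

lemma hh_single (ζ : ℂ) (z : Fin L → Fin N) (j : Fin L) (m : ℤ) :
    hh ζ z (Pi.single j m) = ζ ^ ((z j : ℤ) * m) := by
  rw [hh, Fintype.prod_eq_single j]
  · simp
  · intro i hi
    simp [Pi.single_apply, hi]

lemma sum_hh (ζ : ℂ) (c : Fin L → ℤ) :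
    ∑ z : Fin L → Fin N, hh ζ z c = ∏ j, ∑ x : Fin N, ζ ^ ((x : ℤ) * c j) := by
  simp only [hh]
  rw [Fintype.prod_sum]

lemma geom_zero {η : ℂ} (hη : η ≠ 1) (hroot : η ^ N = 1) :
    ∑ x : Fin N, η ^ (x : ℕ) = 0 := by
  rw [Fin.sum_univ_eq_sum_range (fun i => η ^ i), geom_sum_eq hη, hroot]
  simp

lemma g_zero {ζ : ℂ} (hζ : ζ ≠ 0) (h1 : ζ ≠ 1) (h2 : ζ ^ (2:ℤ) ≠ 1) (hN : ζ ^ (N:ℤ) = 1)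
    {m : ℤ} (hm1 : m ≠ 0) (hm2 : m.natAbs ≤ 2) :
    ∑ x : Fin N, ζ ^ ((x : ℤ) * m) = 0 := by
  have key : ∀ x : Fin N, ζ ^ ((x : ℤ) * m) = (ζ ^ m) ^ (x : ℕ) := by
    intro x
    rw [mul_comm, zpow_mul]
    norm_cast
  simp only [key]
  apply geom_zero
  · intro h
    have hl : -2 ≤ m := by omega
    have hu : m ≤ 2 := by omega
    have hinv : ζ ^ (-m) = 1 := by rw [zpow_neg, h, inv_one]
    interval_cases m
    · exact h2 (by simpa using hinv)
    · exact h1 (by simpa using hinv)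
    · exact hm1 rfl
    · exact h1 (by simpa using h)
    · exact h2 h
  · rw [← zpow_natCast, ← zpow_mul, mul_comm, zpow_mul, hN, one_zpow]

lemma W_zero {ζ : ℂ} (hζ : ζ ≠ 0) (h1 : ζ ≠ 1) (h2 : ζ ^ (2:ℤ) ≠ 1) (hN : ζ ^ (N:ℤ) = 1)
    {c : Fin L → ℤ} (hbd : ∀ i, (c i).natAbs ≤ 2) {i₀ : Fin L} (hi₀ : c i₀ ≠ 0) :
    ∑ z : Fin L → Fin N, hh ζ z c = 0 := by
  rw [sum_hh]
  exact Finset.prod_eq_zero (Finset.mem_univ i₀) (g_zero hζ h1 h2 hN hi₀ (hbd i₀))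

lemma W_full (ζ : ℂ) : ∑ z : Fin L → Fin N, hh ζ z 0 = (N : ℂ) ^ L := by
  simp [hh, Finset.card_univ]


variable {ζ : ℂ} (hζ : ζ ≠ 0) (h1 : ζ ≠ 1) (h2 : ζ ^ (2:ℤ) ≠ 1) (hNz : ζ ^ (N:ℤ) = 1)

-- single sum
include hζ h1 h2 hNz in
lemma sumS (e : ℤ) (he : e = 1 ∨ e = -1) :
    ∑ z : Fin L → Fin N, ∑ j, hh ζ z (Pi.single j e) = 0 := by
  rw [Finset.sum_comm]
  apply Finset.sum_eq_zero
  intro j _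
  refine W_zero hζ h1 h2 hNz (fun i => ?_) (i₀ := j) ?_
  · rcases he with h | h <;> simp [Pi.single_apply, h] <;> split <;> simp
  · rcases he with h | h <;> simp [h]

include hζ h1 h2 hNz in
lemma sumSS (e : ℤ) (he : e = 1 ∨ e = -1) :
    ∑ z : Fin L → Fin N, (∑ j, hh ζ z (Pi.single j e)) * (∑ k, hh ζ z (Pi.single k e)) = 0 := by
  have expand : ∀ z : Fin L → Fin N,
      (∑ j, hh ζ z (Pi.single j e)) * (∑ k, hh ζ z (Pi.single k e))
        = ∑ j, ∑ k, hh ζ z (Pi.single j e + Pi.single k e) := by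
    intro z
    rw [Finset.sum_mul_sum]
    simp [hh_add hζ]
  simp only [expand]
  rw [Finset.sum_comm]
  apply Finset.sum_eq_zero
  intro j _
  rw [Finset.sum_comm]
  apply Finset.sum_eq_zero
  intro k _
  refine W_zero hζ h1 h2 hNz (fun i => ?_) (i₀ := j) ?_
  · rcases he with h | h <;> simp [Pi.single_apply, h] <;> split <;> split <;> simp
  · rcases he with h | h <;> simp [Pi.single_apply, h] <;> split <;> omega

include hζ h1 h2 hNz in
lemma sumST :
    ∑ z : Fin L → Fin N,
      (∑ j, hh ζ z (Pi.single j 1)) * (∑ k, hh ζ z (Pi.single k (-1)))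
      = L * (N : ℂ) ^ L := by
  have expand : ∀ z : Fin L → Fin N,
      (∑ j, hh ζ z (Pi.single j 1)) * (∑ k, hh ζ z (Pi.single k (-1)))
        = ∑ j, ∑ k, hh ζ z (Pi.single j 1 + Pi.single k (-1)) := by
    intro z
    rw [Finset.sum_mul_sum]
    simp [hh_add hζ]
  simp only [expand]
  rw [Finset.sum_comm]
  have inner : ∀ j : Fin L,
      (∑ z : Fin L → Fin N, ∑ k, hh ζ z (Pi.single j 1 + Pi.single k (-1)))
        = (N : ℂ) ^ L := by
    intro j
    rw [Finset.sum_comm]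
    rw [Finset.sum_eq_single_of_mem j (Finset.mem_univ j)]
    · have : (Pi.single j (1:ℤ) + Pi.single j (-1) : Fin L → ℤ) = 0 := by
        ext i; simp [Pi.single_apply]; split <;> simp
      rw [this, W_full]
    · intro k _ hk
      refine W_zero hζ h1 h2 hNz (fun i => ?_) (i₀ := j) ?_
      · simp [Pi.single_apply]; split <;> split <;> omega
      · simp [Pi.single_apply, hk.symm]
  simp [inner, Finset.card_univ]


include hζ h1 h2 hNz in
lemma sumSST (e1 e2 e3 : ℤ) (he1 : e1 = 1 ∨ e1 = -1) (he2 : e2 = 1 ∨ e2 = -1)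
    (he3 : e3 = 1 ∨ e3 = -1) (hsum : (e1 + e2 + e3).natAbs ≤ 2) :
    ∑ z : Fin L → Fin N,
      (∑ j, hh ζ z (Pi.single j e1)) * (∑ k, hh ζ z (Pi.single k e2))
        * (∑ l, hh ζ z (Pi.single l e3)) = 0 := by
  have expand : ∀ z : Fin L → Fin N,
      (∑ j, hh ζ z (Pi.single j e1)) * (∑ k, hh ζ z (Pi.single k e2))
        * (∑ l, hh ζ z (Pi.single l e3))
        = ∑ l, ∑ k, ∑ j, hh ζ z (Pi.single j e1 + Pi.single k e2 + Pi.single l e3) := by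
    intro z
    simp only [Finset.sum_mul, Finset.mul_sum, hh_add hζ]
  simp only [expand]
  rw [Finset.sum_comm]
  refine Finset.sum_eq_zero fun l _ => ?_
  rw [Finset.sum_comm]
  refine Finset.sum_eq_zero fun k _ => ?_
  rw [Finset.sum_comm]
  refine Finset.sum_eq_zero fun j _ => ?_
  set c : Fin L → ℤ := Pi.single j e1 + Pi.single k e2 + Pi.single l e3 with hc
  have hcs : ∑ i, c i = e1 + e2 + e3 := by
    simp [hc, Finset.sum_add_distrib]
  have hex : ∃ i, c i ≠ 0 := by
    by_contra h
    push_neg at h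
    have : ∑ i, c i = 0 := Finset.sum_eq_zero fun i _ => h i
    rw [hcs] at this
    omega
  obtain ⟨i₀, hi₀⟩ := hex
  refine W_zero hζ h1 h2 hNz (fun i => ?_) hi₀
  simp only [hc, Pi.add_apply, Pi.single_apply]
  split_ifs <;> omega

include hζ h1 h2 hNz in
lemma sumSSTT :
    ∑ z : Fin L → Fin N,
      ((∑ j, hh ζ z (Pi.single j 1)) * (∑ k, hh ζ z (Pi.single k 1)))
        * ((∑ l, hh ζ z (Pi.single l (-1))) * (∑ m, hh ζ z (Pi.single m (-1))))
      = (2 * L ^ 2 - L) * (N : ℂ) ^ L := by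
  classical
  set K : ℂ := (N : ℂ) ^ L with hK
  set c : Fin L → Fin L → Fin L → Fin L → Fin L → ℤ := fun j k l m =>
    (Pi.single j 1 + Pi.single k 1) + (Pi.single l (-1) + Pi.single m (-1)) with hc
  have expand : ∀ z : Fin L → Fin N,
      ((∑ j, hh ζ z (Pi.single j 1)) * (∑ k, hh ζ z (Pi.single k 1)))
        * ((∑ l, hh ζ z (Pi.single l (-1))) * (∑ m, hh ζ z (Pi.single m (-1))))
      = ∑ m, ∑ l, ∑ k, ∑ j, hh ζ z (c j k l m) := by
    intro z
    simp only [hc, Finset.sum_mul, Finset.mul_sum, hh_add hζ]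
  simp only [expand]
  rw [Finset.sum_comm]
  have hval : ∀ j k l m : Fin L, ∑ z : Fin L → Fin N, hh ζ z (c j k l m)
      = if (j = l ∧ k = m) ∨ (j = m ∧ k = l) then K else 0 := by
    intro j k l m
    by_cases hcond : (j = l ∧ k = m) ∨ (j = m ∧ k = l)
    · rw [if_pos hcond]
      have hc0 : c j k l m = 0 := by
        rcases hcond with ⟨rfl, rfl⟩ | ⟨rfl, rfl⟩ <;>
          · ext i
            simp only [hc, Pi.add_apply, Pi.single_apply, Pi.zero_apply]
            split_ifs <;> omega
      rw [hc0, W_full]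
    · rw [if_neg hcond]
      have hex : ∃ i, c j k l m i ≠ 0 := by
        by_cases hjl : j = l
        · have hkm : ¬ k = m := fun h => hcond (Or.inl ⟨hjl, h⟩)
          refine ⟨k, ?_⟩
          subst hjl
          simp only [hc, Pi.add_apply, Pi.single_apply]
          split_ifs <;> omega
        · by_cases hjm : j = m
          · have hkl : ¬ k = l := fun h => hcond (Or.inr ⟨hjm, h⟩)
            refine ⟨k, ?_⟩
            subst hjm
            simp only [hc, Pi.add_apply, Pi.single_apply]
            split_ifs <;> omega
          · refine ⟨j, ?_⟩
            simp only [hc, Pi.add_apply, Pi.single_apply]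
            split_ifs <;> omega
      obtain ⟨i₀, hi₀⟩ := hex
      refine W_zero hζ h1 h2 hNz (fun i => ?_) hi₀
      simp only [hc, Pi.add_apply, Pi.single_apply]
      split_ifs <;> omega
  have step : ∑ m : Fin L, ∑ x : Fin L → Fin N, ∑ l : Fin L, ∑ k : Fin L, ∑ j : Fin L, hh ζ x (c j k l m)
      = ∑ m : Fin L, ∑ l : Fin L, ∑ k : Fin L, ∑ j : Fin L,
          (if (j = l ∧ k = m) ∨ (j = m ∧ k = l) then K else 0) := by
    refine Finset.sum_congr rfl fun m _ => ?_
    rw [Finset.sum_comm]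
    refine Finset.sum_congr rfl fun l _ => ?_
    rw [Finset.sum_comm]
    refine Finset.sum_congr rfl fun k _ => ?_
    rw [Finset.sum_comm]
    exact Finset.sum_congr rfl fun j _ => hval j k l m
  rw [step]
  have inner2 : ∀ l m : Fin L, (∑ k : Fin L, ∑ j : Fin L,
      (if (j = l ∧ k = m) ∨ (j = m ∧ k = l) then K else 0)) = 2 * K - (if l = m then K else 0) := by
    intro l m
    by_cases hlm : l = m
    · subst hlm
      simp only [if_pos rfl]
      have : ∀ j k : Fin L, ((j = l ∧ k = l) ∨ (j = l ∧ k = l)) ↔ (j = l ∧ k = l) := fun _ _ => or_self_iff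
      simp only [this]
      simp [ite_and, Finset.sum_ite_eq, Finset.sum_ite_eq']
      ring
    · rw [if_neg hlm]
      have split : ∀ j k : Fin L, (if (j = l ∧ k = m) ∨ (j = m ∧ k = l) then K else 0)
          = (if (j = l ∧ k = m) then K else 0) + (if (j = m ∧ k = l) then K else 0) := by
        intro j k
        by_cases hA : j = l ∧ k = m
        · have hB : ¬(j = m ∧ k = l) := fun hB => hlm (hA.1.symm.trans hB.1)
          simp [hA, hB] <;> tauto
        · by_cases hB : j = m ∧ k = l
          · simp [hA, hB] <;> tauto
          · simp [hA, hB] <;> tauto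
      simp only [split, Finset.sum_add_distrib]
      simp [ite_and, Finset.sum_ite_eq, Finset.sum_ite_eq']
      ring
  have swap0 : (∑ m : Fin L, ∑ l : Fin L, ∑ k : Fin L, ∑ j : Fin L,
      (if (j = l ∧ k = m) ∨ (j = m ∧ k = l) then K else 0))
      = ∑ m : Fin L, ∑ l : Fin L, (2 * K - (if l = m then K else 0)) := by
    exact Finset.sum_congr rfl fun m _ => Finset.sum_congr rfl fun l _ => inner2 l m
  rw [swap0]
  simp [Finset.sum_sub_distrib, Finset.sum_ite_eq, Finset.card_univ]
  ring

end aux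

theorem stmt_11 (N : ℕ) (hN : 1 ≤ N) (L : ℕ)
    (ω : ℂ) (hω : ω = Complex.exp (-2 * Real.pi * Complex.I / N))
    (y : ℤ) (hy : ¬ (N : ℤ) ∣ y) (hy2 : ¬ (N : ℤ) ∣ 2 * y)
    (s : ℤ) (a b : ℝ) :
    (1 / (N : ℝ) ^ L) * (∑ z : Fin L → Fin N,
        (‖((a : ℂ) * ω ^ (s * y)
            + (b : ℂ) * ∑ j : Fin L, ω ^ (((z j : ℕ) : ℤ) * y))‖ ^ 2) ^ 2)
      - ((1 / (N : ℝ) ^ L) * ∑ z : Fin L → Fin N,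
          ‖((a : ℂ) * ω ^ (s * y)
            + (b : ℂ) * ∑ j : Fin L, ω ^ (((z j : ℕ) : ℤ) * y))‖ ^ 2) ^ 2
      = b ^ 4 * ((L : ℝ) ^ 2 - L) + 2 * a ^ 2 * b ^ 2 * L := by
  classical
  have hNne : (N : ℂ) ≠ 0 := Nat.cast_ne_zero.2 (by omega)
  have hωne : ω ≠ 0 := by rw [hω]; exact Complex.exp_ne_zero _
  have hroot : ω ^ (N : ℤ) = 1 := by
    rw [hω, zpow_natCast, ← Complex.exp_nat_mul]
    have : (N : ℂ) * (-2 * Real.pi * Complex.I / N) = (-1 : ℤ) * (2 * Real.pi * Complex.I) := by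
      field_simp
      ring
    rw [this, Complex.exp_int_mul_two_pi_mul_I]
  have hdvd : ∀ m : ℤ, ω ^ m = 1 → (N : ℤ) ∣ m := by
    intro m hm
    rw [hω, ← Complex.exp_int_mul, Complex.exp_eq_one_iff] at hm
    obtain ⟨n, hn⟩ := hm
    have hπ : (Real.pi : ℂ) ≠ 0 := Complex.ofReal_ne_zero.2 Real.pi_ne_zero
    have h2 : (2 * (Real.pi:ℂ) * Complex.I : ℂ) ≠ 0 := by
      simp [Complex.I_ne_zero, hπ]
    field_simp at hn
    have key : ((-m : ℤ) : ℂ) * (2*(Real.pi:ℂ)*Complex.I)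
        = ((n*N : ℤ) : ℂ) * (2*(Real.pi:ℂ)*Complex.I) := by
      push_cast
      linear_combination (2*(Real.pi:ℂ)*Complex.I) * hn
    have hmn : (-m : ℤ) = n * N := by exact_mod_cast mul_right_cancel₀ h2 key
    exact ⟨-n, by linear_combination -hmn⟩
  set ζ : ℂ := ω ^ y with hζdef
  have hζ0 : ζ ≠ 0 := zpow_ne_zero _ hωne
  have hζ1 : ζ ≠ 1 := fun h => hy (hdvd y h)
  have hζ2 : ζ ^ (2:ℤ) ≠ 1 := by
    intro h
    have h2y : ω ^ (2*y) = ζ ^ (2:ℤ) := by rw [hζdef, ← zpow_mul, mul_comm]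
    exact hy2 (hdvd _ (h2y.trans h))
  have hζN : ζ ^ (N:ℤ) = 1 := by
    rw [hζdef, ← zpow_mul, mul_comm, zpow_mul, hroot, one_zpow]
  have hconj : (starRingEnd ℂ) ω = ω⁻¹ := by
    rw [hω, ← Complex.exp_conj, ← Complex.exp_neg]
    congr 1
    simp [map_div₀, map_ofNat]
    ring
  have hconjpow : ∀ m : ℤ, (starRingEnd ℂ) (ω ^ m) = ω ^ (-m) := by
    intro m
    rw [map_zpow₀, hconj, ← zpow_neg_one, ← zpow_mul, neg_one_mul]
  have hrw : ∀ (z : Fin L → Fin N) (j : Fin L),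
      ω ^ (((z j : ℕ) : ℤ) * y) = hh ζ z (Pi.single j 1) := by
    intro z j
    rw [hh_single, mul_one, hζdef, ← zpow_mul, mul_comm]
  have hrwT : ∀ (z : Fin L → Fin N) (j : Fin L),
      (starRingEnd ℂ) (hh ζ z (Pi.single j 1)) = hh ζ z (Pi.single j (-1)) := by
    intro z j
    rw [hh_single, hh_single, hζdef, ← zpow_mul, ← zpow_mul, hconjpow]
    congr 1
    ring
  simp only [hrw]
  set A : ℂ := (a : ℂ) * ω ^ (s * y) with hA
  set A' : ℂ := (a : ℂ) * ω ^ (-(s * y)) with hA'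
  have hAA' : A * A' = (a:ℂ)^2 := by
    rw [hA, hA', zpow_neg,
      show ((a:ℂ)*ω^(s*y)) * ((a:ℂ)*(ω^(s*y))⁻¹) = (a:ℂ)^2 * (ω^(s*y) * (ω^(s*y))⁻¹) from by ring,
      mul_inv_cancel₀ (zpow_ne_zero _ hωne), mul_one]
  have habs : ∀ z : Fin L → Fin N,
      ((‖A + (b:ℂ) * ∑ j, hh ζ z (Pi.single j 1)‖ ^ 2 : ℝ) : ℂ)
        = (A + (b:ℂ) * ∑ j, hh ζ z (Pi.single j 1))
            * (A' + (b:ℂ) * ∑ j, hh ζ z (Pi.single j (-1))) := by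
    intro z
    rw [Complex.sq_norm, ← Complex.mul_conj]
    congr 1
    rw [map_add, map_mul, map_mul, map_sum]
    simp only [hrwT, Complex.conj_ofReal, hA, hA', hconjpow]
  have hsum1 : ∑ z : Fin L → Fin N,
      ((A + (b:ℂ) * ∑ j, hh ζ z (Pi.single j 1))
        * (A' + (b:ℂ) * ∑ j, hh ζ z (Pi.single j (-1))))
      = (N:ℂ)^L * ((a:ℂ)^2 + (b:ℂ)^2 * L) := by
    have exp1 : ∀ z : Fin L → Fin N,
        (A + (b:ℂ) * ∑ j, hh ζ z (Pi.single j 1))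
          * (A' + (b:ℂ) * ∑ j, hh ζ z (Pi.single j (-1)))
        = (a:ℂ)^2 + (A*(b:ℂ)) * (∑ j, hh ζ z (Pi.single j (-1)))
          + (A'*(b:ℂ)) * (∑ j, hh ζ z (Pi.single j 1))
          + (b:ℂ)^2 * ((∑ j, hh ζ z (Pi.single j 1)) * (∑ k, hh ζ z (Pi.single k (-1)))) := by
      intro z
      linear_combination hAA'
    simp only [exp1]
    rw [Finset.sum_add_distrib, Finset.sum_add_distrib, Finset.sum_add_distrib,
      ← Finset.mul_sum, ← Finset.mul_sum, ← Finset.mul_sum,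
      sumS hζ0 hζ1 hζ2 hζN (-1) (Or.inr rfl), sumS hζ0 hζ1 hζ2 hζN 1 (Or.inl rfl),
      sumST hζ0 hζ1 hζ2 hζN]
    simp [Finset.card_univ]
    push_cast
    ring
  have hsum2 : ∑ z : Fin L → Fin N,
      ((A + (b:ℂ) * ∑ j, hh ζ z (Pi.single j 1))
        * (A' + (b:ℂ) * ∑ j, hh ζ z (Pi.single j (-1))))^2
      = (N:ℂ)^L * ((a:ℂ)^4 + 4*(a:ℂ)^2*(b:ℂ)^2*L + (b:ℂ)^4*(2*(L:ℂ)^2 - L)) := by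
    have exp2 : ∀ z : Fin L → Fin N,
        ((A + (b:ℂ) * ∑ j, hh ζ z (Pi.single j 1))
          * (A' + (b:ℂ) * ∑ j, hh ζ z (Pi.single j (-1))))^2
        = (a:ℂ)^4
          + (2*(a:ℂ)^2*(b:ℂ)*A) * (∑ j, hh ζ z (Pi.single j (-1)))
          + (A^2*(b:ℂ)^2) * ((∑ j, hh ζ z (Pi.single j (-1))) * (∑ k, hh ζ z (Pi.single k (-1))))
          + (2*(a:ℂ)^2*(b:ℂ)*A') * (∑ j, hh ζ z (Pi.single j 1))
          + (4*(a:ℂ)^2*(b:ℂ)^2) * ((∑ j, hh ζ z (Pi.single j 1)) * (∑ k, hh ζ z (Pi.single k (-1))))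
          + (2*A*(b:ℂ)^3) * ((∑ j, hh ζ z (Pi.single j 1)) * (∑ k, hh ζ z (Pi.single k (-1)))
              * (∑ l, hh ζ z (Pi.single l (-1))))
          + (A'^2*(b:ℂ)^2) * ((∑ j, hh ζ z (Pi.single j 1)) * (∑ k, hh ζ z (Pi.single k 1)))
          + (2*A'*(b:ℂ)^3) * ((∑ j, hh ζ z (Pi.single j 1)) * (∑ k, hh ζ z (Pi.single k 1))
              * (∑ l, hh ζ z (Pi.single l (-1))))
          + (b:ℂ)^4 * (((∑ j, hh ζ z (Pi.single j 1)) * (∑ k, hh ζ z (Pi.single k 1)))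
              * ((∑ l, hh ζ z (Pi.single l (-1))) * (∑ m, hh ζ z (Pi.single m (-1))))) := by
      intro z
      linear_combination (A*A' + (a:ℂ)^2 + 2*A*(b:ℂ)*(∑ j, hh ζ z (Pi.single j (-1)))
        + 2*A'*(b:ℂ)*(∑ j, hh ζ z (Pi.single j 1))
        + 4*(b:ℂ)^2*((∑ j, hh ζ z (Pi.single j 1)) * (∑ j, hh ζ z (Pi.single j (-1))))) * hAA'
    simp only [exp2]
    rw [Finset.sum_add_distrib, Finset.sum_add_distrib, Finset.sum_add_distrib,
      Finset.sum_add_distrib, Finset.sum_add_distrib, Finset.sum_add_distrib,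
      Finset.sum_add_distrib, Finset.sum_add_distrib,
      ← Finset.mul_sum, ← Finset.mul_sum, ← Finset.mul_sum, ← Finset.mul_sum,
      ← Finset.mul_sum, ← Finset.mul_sum, ← Finset.mul_sum, ← Finset.mul_sum,
      sumS hζ0 hζ1 hζ2 hζN (-1) (Or.inr rfl), sumS hζ0 hζ1 hζ2 hζN 1 (Or.inl rfl),
      sumSS hζ0 hζ1 hζ2 hζN (-1) (Or.inr rfl), sumSS hζ0 hζ1 hζ2 hζN 1 (Or.inl rfl),
      sumST hζ0 hζ1 hζ2 hζN,
      sumSST hζ0 hζ1 hζ2 hζN 1 (-1) (-1) (Or.inl rfl) (Or.inr rfl) (Or.inr rfl) (by norm_num),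
      sumSST hζ0 hζ1 hζ2 hζN 1 1 (-1) (Or.inl rfl) (Or.inl rfl) (Or.inr rfl) (by norm_num),
      sumSSTT hζ0 hζ1 hζ2 hζN]
    simp [Finset.card_univ]
    push_cast
    ring
  have hKne : ((N:ℝ))^L ≠ 0 := pow_ne_zero _ (Nat.cast_ne_zero.2 (by omega))
  have hre1 : (∑ z : Fin L → Fin N,
      ‖A + (b:ℂ) * ∑ j, hh ζ z (Pi.single j 1)‖ ^ 2)
      = (N:ℝ)^L * (a^2 + b^2 * L) := by
    apply Complex.ofReal_injective
    rw [Complex.ofReal_sum]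
    rw [Finset.sum_congr rfl fun z _ => habs z, hsum1]
    push_cast
    ring
  have hre2 : (∑ z : Fin L → Fin N,
      (‖A + (b:ℂ) * ∑ j, hh ζ z (Pi.single j 1)‖ ^ 2) ^ 2)
      = (N:ℝ)^L * (a^4 + 4*a^2*b^2*L + b^4*(2*(L:ℝ)^2 - L)) := by
    apply Complex.ofReal_injective
    rw [Complex.ofReal_sum]
    have : ∀ z : Fin L → Fin N,
        (((‖A + (b:ℂ) * ∑ j, hh ζ z (Pi.single j 1)‖ ^ 2) ^ 2 : ℝ) : ℂ)
        = ((A + (b:ℂ) * ∑ j, hh ζ z (Pi.single j 1))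
            * (A' + (b:ℂ) * ∑ j, hh ζ z (Pi.single j (-1))))^2 := by
      intro z
      rw [Complex.ofReal_pow, habs z]
    rw [Finset.sum_congr rfl fun z _ => this z, hsum2]
    push_cast
    ring
  rw [hre1, hre2]
  field_simp
  ring
end

section
/- Let N ≥ 1 and L ≥ 0 be integers, let ω = exp(−2πi/N), let y be an integer with N ∤ y and N ∤ 2·y, and let a, b, c be real numbers. Then the variance over all N^L tuples (z_1,…,z_L) with each z_j ∈ {0,1,…,N−1} of the random quantity X = |a + i·c + b·∑_{j=1}^{L} ω^{z_j·y}|² equals b⁴·(L² − L) + 2·(a² + c²)·b²·L. -/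
open Real Complex

section Aux

open Finset

lemma aux_sum_split {N L : ℕ} (F : (Fin (L+1) → Fin N) → ℂ) :
    ∑ z : Fin (L+1) → Fin N, F z
      = ∑ x : Fin N, ∑ z : Fin L → Fin N, F (Fin.cons x z) := by
  rw [← Fintype.sum_prod_type (f := fun p : Fin N × (Fin L → Fin N) => F (Fin.cons p.1 p.2))]
  exact (Fintype.sum_equiv (Fin.consEquiv (fun _ => Fin N)) _ _ (fun p => rfl)).symm

lemma aux_card_fn {N L : ℕ} : (Finset.univ : Finset (Fin L → Fin N)).card = N ^ L := by
  simp [Finset.card_univ]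

lemma aux_exp_ne_one (N : ℕ) (hN : 1 ≤ N) (m : ℤ) (hm : ¬ (N:ℤ) ∣ m) :
    Complex.exp ((m:ℂ) * (-2 * Real.pi * Complex.I / N)) ≠ 1 := by
  intro h
  rw [Complex.exp_eq_one_iff] at h
  obtain ⟨n, hn⟩ := h
  have hN0 : (N:ℂ) ≠ 0 := Nat.cast_ne_zero.mpr (by omega)
  have hπ : (2 * (Real.pi:ℂ) * Complex.I) ≠ 0 := by
    simp [Real.pi_ne_zero, Complex.I_ne_zero, Complex.ofReal_ne_zero]
  have key : ((-m : ℤ) : ℂ) * (2 * (Real.pi:ℂ) * Complex.I)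
      = ((n * N : ℤ) : ℂ) * (2 * (Real.pi:ℂ) * Complex.I) := by
    push_cast
    field_simp at hn
    linear_combination (2 * (Real.pi:ℂ) * Complex.I) * hn
  have hcan := mul_right_cancel₀ hπ key
  have h2 : (-m : ℤ) = n * N := by exact_mod_cast hcan
  exact hm ⟨-n, by linarith⟩

lemma aux_exp_pow_eq_one (N : ℕ) (hN : 1 ≤ N) (m : ℤ) :
    Complex.exp ((m:ℂ) * (-2 * Real.pi * Complex.I / N)) ^ N = 1 := by
  have hN0 : (N:ℂ) ≠ 0 := Nat.cast_ne_zero.mpr (by omega)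
  rw [← Complex.exp_nat_mul]
  have h : (N:ℂ) * ((m:ℂ) * (-2 * Real.pi * Complex.I / N))
      = ((-m : ℤ):ℂ) * (2 * (Real.pi:ℂ) * Complex.I) := by
    push_cast; field_simp
  rw [h, Complex.exp_int_mul_two_pi_mul_I]

lemma aux_geom_zero {N : ℕ} (u : ℂ) (hu1 : u ≠ 1) (huN : u ^ N = 1) :
    ∑ x : Fin N, u ^ (x : ℕ) = 0 := by
  rw [Fin.sum_univ_eq_sum_range, geom_sum_eq hu1, huN, sub_self, zero_div]

lemma aux_moments {N : ℕ} (τ : Fin N → ℂ)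
    (h1 : ∑ x : Fin N, τ x = 0) (h2 : ∑ x : Fin N, (τ x)^2 = 0)
    (hτ : ∀ x, τ x * (starRingEnd ℂ) (τ x) = 1) :
    ∀ L : ℕ,
      (∑ z : Fin L → Fin N, ∑ j, τ (z j)) = 0 ∧
      (∑ z : Fin L → Fin N, (∑ j, τ (z j))^2) = 0 ∧
      (∑ z : Fin L → Fin N, (∑ j, τ (z j)) * (starRingEnd ℂ) (∑ j, τ (z j))) = L * N^L ∧
      (∑ z : Fin L → Fin N, (∑ j, τ (z j))^2 * (starRingEnd ℂ) (∑ j, τ (z j))) = 0 ∧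
      (∑ z : Fin L → Fin N, (∑ j, τ (z j))^2 * ((starRingEnd ℂ) (∑ j, τ (z j)))^2)
        = (2*(L:ℂ)^2 - L) * N^L := by
  intro L
  induction L with
  | zero => simp
  | succ L IH =>
    obtain ⟨P, Q, R, U, V⟩ := IH
    have Pc : ∑ z : Fin L → Fin N, (starRingEnd ℂ) (∑ j, τ (z j)) = 0 := by
      rw [← map_sum, P, map_zero]
    have Qc : ∑ z : Fin L → Fin N, ((starRingEnd ℂ) (∑ j, τ (z j)))^2 = 0 := by
      have hq := congrArg (starRingEnd ℂ) Q
      rw [map_sum, map_zero] at hq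
      simpa using hq
    have Uc : ∑ z : Fin L → Fin N, (∑ j, τ (z j)) * ((starRingEnd ℂ) (∑ j, τ (z j)))^2 = 0 := by
      have hu := congrArg (starRingEnd ℂ) U
      rw [map_sum, map_zero] at hu
      rw [← hu]
      exact Finset.sum_congr rfl fun z _ => by simp; ring
    have hcons : ∀ (x : Fin N) (z : Fin L → Fin N),
        (∑ j : Fin (L+1), τ ((Fin.cons x z : Fin (L+1) → Fin N) j))
          = τ x + ∑ j : Fin L, τ (z j) := fun x z => by
      rw [Fin.sum_univ_succ]
      simp
    refine ⟨?_, ?_, ?_, ?_, ?_⟩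
    · rw [aux_sum_split]
      simp only [hcons]
      have inner : ∀ x : Fin N, ∑ z : Fin L → Fin N, (τ x + ∑ j, τ (z j))
          = (N:ℂ)^L * τ x := fun x => by
        rw [Finset.sum_add_distrib, P, Finset.sum_const, aux_card_fn, nsmul_eq_mul]
        push_cast; ring
      rw [Finset.sum_congr rfl fun x _ => inner x, ← Finset.mul_sum, h1, mul_zero]
    · rw [aux_sum_split]
      simp only [hcons]
      have inner : ∀ x : Fin N, ∑ z : Fin L → Fin N, (τ x + ∑ j, τ (z j))^2
          = (N:ℂ)^L * (τ x)^2 := fun x => by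
        have expand : ∀ z : Fin L → Fin N, (τ x + ∑ j, τ (z j))^2
            = (τ x)^2 + (2 * τ x) * (∑ j, τ (z j)) + (∑ j, τ (z j))^2 := fun z => by ring
        rw [Finset.sum_congr rfl fun z _ => expand z]
        simp only [Finset.sum_add_distrib, ← Finset.mul_sum]
        rw [P, Q, Finset.sum_const, aux_card_fn, nsmul_eq_mul]
        push_cast; ring
      rw [Finset.sum_congr rfl fun x _ => inner x, ← Finset.mul_sum, h2, mul_zero]
    · rw [aux_sum_split]
      simp only [hcons, map_add]
      have inner : ∀ x : Fin N, ∑ z : Fin L → Fin N,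
          (τ x + ∑ j, τ (z j)) * ((starRingEnd ℂ) (τ x) + (starRingEnd ℂ) (∑ j, τ (z j)))
          = ((L:ℂ) + 1) * (N:ℂ)^L := fun x => by
        have expand : ∀ z : Fin L → Fin N,
            (τ x + ∑ j, τ (z j)) * ((starRingEnd ℂ) (τ x) + (starRingEnd ℂ) (∑ j, τ (z j)))
            = τ x * (starRingEnd ℂ) (τ x)
              + (τ x) * ((starRingEnd ℂ) (∑ j, τ (z j)))
              + ((starRingEnd ℂ) (τ x)) * (∑ j, τ (z j))
              + (∑ j, τ (z j)) * (starRingEnd ℂ) (∑ j, τ (z j)) := fun z => by ring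
        rw [Finset.sum_congr rfl fun z _ => expand z]
        simp only [Finset.sum_add_distrib, ← Finset.mul_sum]
        rw [P, Pc, R, Finset.sum_const, aux_card_fn, nsmul_eq_mul]
        push_cast
        linear_combination (N:ℂ)^L * hτ x
      rw [Finset.sum_congr rfl fun x _ => inner x, Finset.sum_const, Finset.card_univ,
        Fintype.card_fin, nsmul_eq_mul]
      push_cast; ring
    · rw [aux_sum_split]
      simp only [hcons, map_add]
      have inner : ∀ x : Fin N, ∑ z : Fin L → Fin N,
          (τ x + ∑ j, τ (z j))^2 * ((starRingEnd ℂ) (τ x) + (starRingEnd ℂ) (∑ j, τ (z j)))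
          = ((N:ℂ)^L * (1 + 2*L)) * τ x := fun x => by
        have expand : ∀ z : Fin L → Fin N,
            (τ x + ∑ j, τ (z j))^2 * ((starRingEnd ℂ) (τ x) + (starRingEnd ℂ) (∑ j, τ (z j)))
            = (τ x)^2 * (starRingEnd ℂ) (τ x)
              + ((τ x)^2) * ((starRingEnd ℂ) (∑ j, τ (z j)))
              + (2 * τ x * (starRingEnd ℂ) (τ x)) * (∑ j, τ (z j))
              + (2 * τ x) * ((∑ j, τ (z j)) * (starRingEnd ℂ) (∑ j, τ (z j)))
              + ((starRingEnd ℂ) (τ x)) * ((∑ j, τ (z j))^2)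
              + (∑ j, τ (z j))^2 * (starRingEnd ℂ) (∑ j, τ (z j)) := fun z => by ring
        rw [Finset.sum_congr rfl fun z _ => expand z]
        simp only [Finset.sum_add_distrib, ← Finset.mul_sum]
        rw [P, Pc, Q, R, U, Finset.sum_const, aux_card_fn, nsmul_eq_mul]
        push_cast
        linear_combination ((N:ℂ)^L * τ x) * hτ x
      rw [Finset.sum_congr rfl fun x _ => inner x, ← Finset.mul_sum, h1, mul_zero]
    · rw [aux_sum_split]
      simp only [hcons, map_add]
      have inner : ∀ x : Fin N, ∑ z : Fin L → Fin N,
          (τ x + ∑ j, τ (z j))^2 * ((starRingEnd ℂ) (τ x) + (starRingEnd ℂ) (∑ j, τ (z j)))^2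
          = (N:ℂ)^L * (2*(L:ℂ)^2 + 3*L + 1) := fun x => by
        have expand : ∀ z : Fin L → Fin N,
            (τ x + ∑ j, τ (z j))^2 * ((starRingEnd ℂ) (τ x) + (starRingEnd ℂ) (∑ j, τ (z j)))^2
            = (τ x)^2 * ((starRingEnd ℂ) (τ x))^2
              + (2 * (τ x)^2 * (starRingEnd ℂ) (τ x)) * ((starRingEnd ℂ) (∑ j, τ (z j)))
              + ((τ x)^2) * (((starRingEnd ℂ) (∑ j, τ (z j)))^2)
              + (2 * τ x * ((starRingEnd ℂ) (τ x))^2) * (∑ j, τ (z j))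
              + (4 * (τ x * (starRingEnd ℂ) (τ x))) * ((∑ j, τ (z j)) * (starRingEnd ℂ) (∑ j, τ (z j)))
              + (2 * τ x) * ((∑ j, τ (z j)) * ((starRingEnd ℂ) (∑ j, τ (z j)))^2)
              + (((starRingEnd ℂ) (τ x))^2) * ((∑ j, τ (z j))^2)
              + (2 * (starRingEnd ℂ) (τ x)) * ((∑ j, τ (z j))^2 * (starRingEnd ℂ) (∑ j, τ (z j)))
              + (∑ j, τ (z j))^2 * ((starRingEnd ℂ) (∑ j, τ (z j)))^2 := fun z => by ring
        rw [Finset.sum_congr rfl fun z _ => expand z]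
        simp only [Finset.sum_add_distrib, ← Finset.mul_sum]
        rw [P, Pc, Q, Qc, R, U, Uc, V, Finset.sum_const, aux_card_fn, nsmul_eq_mul]
        push_cast
        linear_combination ((N:ℂ)^L * (τ x * (starRingEnd ℂ) (τ x) + 1 + 4*(L:ℂ))) * hτ x
      rw [Finset.sum_congr rfl fun x _ => inner x, Finset.sum_const, Finset.card_univ,
        Fintype.card_fin, nsmul_eq_mul]
      push_cast; ring

end Aux

theorem stmt_12 (N : ℕ) (hN : 1 ≤ N) (L : ℕ)
    (ω : ℂ) (hω : ω = Complex.exp (-2 * Real.pi * Complex.I / N))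
    (y : ℤ) (hy : ¬ (N : ℤ) ∣ y) (hy2 : ¬ (N : ℤ) ∣ 2 * y)
    (a b c : ℝ) :
    (1 / (N : ℝ) ^ L) * (∑ z : Fin L → Fin N,
        (‖((a : ℂ) + Complex.I * (c : ℂ)
            + (b : ℂ) * ∑ j : Fin L, ω ^ (((z j : ℕ) : ℤ) * y))‖ ^ 2) ^ 2)
      - ((1 / (N : ℝ) ^ L) * ∑ z : Fin L → Fin N,
          ‖((a : ℂ) + Complex.I * (c : ℂ)
            + (b : ℂ) * ∑ j : Fin L, ω ^ (((z j : ℕ) : ℤ) * y))‖ ^ 2) ^ 2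
      = b ^ 4 * ((L : ℝ) ^ 2 - L) + 2 * (a ^ 2 + c ^ 2) * b ^ 2 * L := by
  -- basic facts about ζ = ω ^ y
  have hζ : ω ^ y = Complex.exp ((y:ℂ) * (-2 * Real.pi * Complex.I / N)) := by
    rw [hω, Complex.exp_int_mul]
  have hζ1 : ω ^ y ≠ 1 := by rw [hζ]; exact aux_exp_ne_one N hN y hy
  have hζN : (ω ^ y) ^ N = 1 := by rw [hζ]; exact aux_exp_pow_eq_one N hN y
  have hζsq : (ω ^ y) ^ 2 = Complex.exp (((2*y : ℤ):ℂ) * (-2 * Real.pi * Complex.I / N)) := by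
    rw [hζ, ← Complex.exp_nat_mul]
    push_cast; ring_nf
  have hζ2 : (ω ^ y) ^ 2 ≠ 1 := by rw [hζsq]; exact aux_exp_ne_one N hN _ hy2
  have hζ2N : ((ω ^ y) ^ 2) ^ N = 1 := by rw [hζsq]; exact aux_exp_pow_eq_one N hN _
  have hunit : ω ^ y * (starRingEnd ℂ) (ω ^ y) = 1 := by
    rw [hζ, ← Complex.exp_conj, ← Complex.exp_add]
    have h0 : (y:ℂ) * (-2 * ↑Real.pi * Complex.I / ↑N)
        + (starRingEnd ℂ) ((y:ℂ) * (-2 * ↑Real.pi * Complex.I / ↑N)) = 0 := by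
      simp [map_mul, map_div₀, Complex.conj_I, Complex.conj_ofReal, map_ofNat]
      ring
    rw [h0, Complex.exp_zero]
  have h1 : ∑ x : Fin N, (ω ^ y) ^ (x:ℕ) = 0 := aux_geom_zero _ hζ1 hζN
  have h2 : ∑ x : Fin N, ((ω ^ y) ^ (x:ℕ))^2 = 0 := by
    have hp : ∀ x : Fin N, ((ω ^ y) ^ (x:ℕ))^2 = ((ω ^ y)^2) ^ (x:ℕ) := fun x => by
      rw [← pow_mul, ← pow_mul, Nat.mul_comm]
    rw [Finset.sum_congr rfl fun x _ => hp x]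
    exact aux_geom_zero _ hζ2 hζ2N
  have hτ : ∀ x : Fin N, (ω ^ y) ^ (x:ℕ) * (starRingEnd ℂ) ((ω ^ y) ^ (x:ℕ)) = 1 := fun x => by
    rw [map_pow, ← mul_pow, hunit, one_pow]
  -- moments
  obtain ⟨P, Q, R, U, V⟩ := aux_moments (fun x : Fin N => (ω ^ y) ^ (x:ℕ)) h1 h2 hτ L
  have Pc : ∑ z : Fin L → Fin N, (starRingEnd ℂ) (∑ j, (ω ^ y) ^ ((z j : ℕ))) = 0 := by
    rw [← map_sum, P, map_zero]
  have Qc : ∑ z : Fin L → Fin N, ((starRingEnd ℂ) (∑ j, (ω ^ y) ^ ((z j : ℕ))))^2 = 0 := by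
    have hq := congrArg (starRingEnd ℂ) Q
    rw [map_sum, map_zero] at hq
    simpa using hq
  have Uc : ∑ z : Fin L → Fin N,
      (∑ j, (ω ^ y) ^ ((z j : ℕ))) * ((starRingEnd ℂ) (∑ j, (ω ^ y) ^ ((z j : ℕ))))^2 = 0 := by
    have hu := congrArg (starRingEnd ℂ) U
    rw [map_sum, map_zero] at hu
    rw [← hu]
    exact Finset.sum_congr rfl fun z _ => by simp; ring
  -- rewrite the goal in terms of ζ = ω ^ y
  have hterm : ∀ x : Fin N, ω ^ (((x : ℕ) : ℤ) * y) = (ω ^ y) ^ (x:ℕ) := fun x => by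
    rw [mul_comm, zpow_mul, zpow_natCast]
  simp only [hterm]
  -- abbreviations
  have huu : ((a:ℂ) + Complex.I * (c:ℂ)) * (starRingEnd ℂ) ((a:ℂ) + Complex.I * (c:ℂ))
      = (a:ℂ)^2 + (c:ℂ)^2 := by
    have hcu : (starRingEnd ℂ) ((a:ℂ) + Complex.I * (c:ℂ)) = (a:ℂ) - Complex.I * (c:ℂ) := by
      simp [map_add, map_mul, Complex.conj_I, Complex.conj_ofReal]
      ring
    rw [hcu]
    linear_combination (-(c:ℂ)^2) * Complex.I_sq
  have hconj : ∀ z : Fin L → Fin N,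
      (starRingEnd ℂ) ((a:ℂ) + Complex.I * (c:ℂ) + (b:ℂ) * ∑ j, (ω ^ y) ^ ((z j : ℕ)))
        = (starRingEnd ℂ) ((a:ℂ) + Complex.I * (c:ℂ))
          + (b:ℂ) * (starRingEnd ℂ) (∑ j, (ω ^ y) ^ ((z j : ℕ))) := fun z => by
    rw [map_add, map_mul, Complex.conj_ofReal]
  have hA : ∑ z : Fin L → Fin N,
      (((a:ℂ) + Complex.I * (c:ℂ) + (b:ℂ) * ∑ j, (ω ^ y) ^ ((z j : ℕ)))
        * (starRingEnd ℂ) ((a:ℂ) + Complex.I * (c:ℂ) + (b:ℂ) * ∑ j, (ω ^ y) ^ ((z j : ℕ))))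
      = ((a:ℂ)^2 + (c:ℂ)^2 + (b:ℂ)^2 * (L:ℂ)) * (N:ℂ)^L := by
    simp only [hconj]
    have expand : ∀ z : Fin L → Fin N,
        ((a:ℂ) + Complex.I * (c:ℂ) + (b:ℂ) * ∑ j, (ω ^ y) ^ ((z j : ℕ)))
          * ((starRingEnd ℂ) ((a:ℂ) + Complex.I * (c:ℂ))
            + (b:ℂ) * (starRingEnd ℂ) (∑ j, (ω ^ y) ^ ((z j : ℕ))))
        = ((a:ℂ) + Complex.I * (c:ℂ)) * (starRingEnd ℂ) ((a:ℂ) + Complex.I * (c:ℂ))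
          + (((a:ℂ) + Complex.I * (c:ℂ)) * (b:ℂ)) * ((starRingEnd ℂ) (∑ j, (ω ^ y) ^ ((z j : ℕ))))
          + ((starRingEnd ℂ) ((a:ℂ) + Complex.I * (c:ℂ)) * (b:ℂ)) * (∑ j, (ω ^ y) ^ ((z j : ℕ)))
          + ((b:ℂ)^2) * ((∑ j, (ω ^ y) ^ ((z j : ℕ)))
              * (starRingEnd ℂ) (∑ j, (ω ^ y) ^ ((z j : ℕ)))) := fun z => by ring
    rw [Finset.sum_congr rfl fun z _ => expand z]
    simp only [Finset.sum_add_distrib, ← Finset.mul_sum]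
    rw [P, Pc, R, Finset.sum_const, aux_card_fn, nsmul_eq_mul]
    push_cast
    linear_combination (N:ℂ)^L * huu
  have hB : ∑ z : Fin L → Fin N,
      ((((a:ℂ) + Complex.I * (c:ℂ) + (b:ℂ) * ∑ j, (ω ^ y) ^ ((z j : ℕ)))
        * (starRingEnd ℂ) ((a:ℂ) + Complex.I * (c:ℂ) + (b:ℂ) * ∑ j, (ω ^ y) ^ ((z j : ℕ)))))^2
      = (((a:ℂ)^2 + (c:ℂ)^2)^2 + 4*((a:ℂ)^2 + (c:ℂ)^2)*(b:ℂ)^2*(L:ℂ)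
          + (b:ℂ)^4 * (2*(L:ℂ)^2 - (L:ℂ))) * (N:ℂ)^L := by
    simp only [hconj]
    have expand : ∀ z : Fin L → Fin N,
        (((a:ℂ) + Complex.I * (c:ℂ) + (b:ℂ) * ∑ j, (ω ^ y) ^ ((z j : ℕ)))
          * ((starRingEnd ℂ) ((a:ℂ) + Complex.I * (c:ℂ))
            + (b:ℂ) * (starRingEnd ℂ) (∑ j, (ω ^ y) ^ ((z j : ℕ)))))^2
        = (((a:ℂ) + Complex.I * (c:ℂ)))^2 * ((starRingEnd ℂ) ((a:ℂ) + Complex.I * (c:ℂ)))^2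
          + (2 * ((a:ℂ) + Complex.I * (c:ℂ))^2 * (starRingEnd ℂ) ((a:ℂ) + Complex.I * (c:ℂ)) * (b:ℂ))
              * ((starRingEnd ℂ) (∑ j, (ω ^ y) ^ ((z j : ℕ))))
          + (((a:ℂ) + Complex.I * (c:ℂ))^2 * (b:ℂ)^2)
              * (((starRingEnd ℂ) (∑ j, (ω ^ y) ^ ((z j : ℕ))))^2)
          + (2 * ((a:ℂ) + Complex.I * (c:ℂ)) * ((starRingEnd ℂ) ((a:ℂ) + Complex.I * (c:ℂ)))^2 * (b:ℂ))
              * (∑ j, (ω ^ y) ^ ((z j : ℕ)))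
          + (4 * (((a:ℂ) + Complex.I * (c:ℂ)) * (starRingEnd ℂ) ((a:ℂ) + Complex.I * (c:ℂ))) * (b:ℂ)^2)
              * ((∑ j, (ω ^ y) ^ ((z j : ℕ))) * (starRingEnd ℂ) (∑ j, (ω ^ y) ^ ((z j : ℕ))))
          + (2 * ((a:ℂ) + Complex.I * (c:ℂ)) * (b:ℂ)^3)
              * ((∑ j, (ω ^ y) ^ ((z j : ℕ))) * ((starRingEnd ℂ) (∑ j, (ω ^ y) ^ ((z j : ℕ))))^2)
          + (((starRingEnd ℂ) ((a:ℂ) + Complex.I * (c:ℂ)))^2 * (b:ℂ)^2)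
              * ((∑ j, (ω ^ y) ^ ((z j : ℕ)))^2)
          + (2 * (starRingEnd ℂ) ((a:ℂ) + Complex.I * (c:ℂ)) * (b:ℂ)^3)
              * ((∑ j, (ω ^ y) ^ ((z j : ℕ)))^2 * (starRingEnd ℂ) (∑ j, (ω ^ y) ^ ((z j : ℕ))))
          + ((b:ℂ)^4)
              * ((∑ j, (ω ^ y) ^ ((z j : ℕ)))^2 * ((starRingEnd ℂ) (∑ j, (ω ^ y) ^ ((z j : ℕ))))^2)
          := fun z => by ring
    rw [Finset.sum_congr rfl fun z _ => expand z]
    simp only [Finset.sum_add_distrib, ← Finset.mul_sum]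
    rw [P, Pc, Q, Qc, R, U, Uc, V, Finset.sum_const, aux_card_fn, nsmul_eq_mul]
    push_cast
    linear_combination ((N:ℂ)^L * (((a:ℂ) + Complex.I * (c:ℂ)) * (starRingEnd ℂ) ((a:ℂ) + Complex.I * (c:ℂ))
      + ((a:ℂ)^2 + (c:ℂ)^2) + 4*(b:ℂ)^2*(L:ℂ))) * huu
  -- real parts
  have habs : ∀ v : ℂ, ((‖v‖ ^ 2 : ℝ) : ℂ) = v * (starRingEnd ℂ) v := fun v => by
    rw [Complex.sq_norm, Complex.mul_conj]
  have hre1 : (∑ z : Fin L → Fin N,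
      ‖((a:ℂ) + Complex.I * (c:ℂ) + (b:ℂ) * ∑ j, (ω ^ y) ^ ((z j : ℕ)))‖ ^ 2)
      = (a^2 + c^2 + b^2*(L:ℝ)) * (N:ℝ)^L := by
    apply Complex.ofReal_injective
    push_cast
    calc (∑ z : Fin L → Fin N,
        (((‖((a:ℂ) + Complex.I * (c:ℂ) + (b:ℂ) * ∑ j, (ω ^ y) ^ ((z j : ℕ)))‖ : ℝ) : ℂ)) ^ 2)
        = ∑ z : Fin L → Fin N,
          (((a:ℂ) + Complex.I * (c:ℂ) + (b:ℂ) * ∑ j, (ω ^ y) ^ ((z j : ℕ)))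
            * (starRingEnd ℂ) ((a:ℂ) + Complex.I * (c:ℂ) + (b:ℂ) * ∑ j, (ω ^ y) ^ ((z j : ℕ)))) := by
          refine Finset.sum_congr rfl fun z _ => ?_
          rw [← habs]
          all_goals push_cast
          all_goals ring
      _ = _ := by rw [hA]
  have hre2 : (∑ z : Fin L → Fin N,
      (‖((a:ℂ) + Complex.I * (c:ℂ) + (b:ℂ) * ∑ j, (ω ^ y) ^ ((z j : ℕ)))‖ ^ 2) ^ 2)
      = ((a^2 + c^2)^2 + 4*(a^2 + c^2)*b^2*(L:ℝ) + b^4 * (2*(L:ℝ)^2 - (L:ℝ))) * (N:ℝ)^L := by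
    apply Complex.ofReal_injective
    push_cast
    calc ∑ z : Fin L → Fin N,
        ((((‖((a:ℂ) + Complex.I * (c:ℂ) + (b:ℂ) * ∑ j, (ω ^ y) ^ ((z j : ℕ)))‖ : ℝ) : ℂ)) ^ 2) ^ 2
        = ∑ z : Fin L → Fin N,
          ((((a:ℂ) + Complex.I * (c:ℂ) + (b:ℂ) * ∑ j, (ω ^ y) ^ ((z j : ℕ)))
            * (starRingEnd ℂ) ((a:ℂ) + Complex.I * (c:ℂ) + (b:ℂ) * ∑ j, (ω ^ y) ^ ((z j : ℕ)))))^2 := by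
          refine Finset.sum_congr rfl fun z _ => ?_
          rw [← habs]
          all_goals push_cast
          all_goals ring
      _ = _ := by rw [hB]
  rw [hre1, hre2]
  have hNL : (N:ℝ)^L ≠ 0 := pow_ne_zero _ (Nat.cast_ne_zero.mpr (by omega))
  field_simp
  ring
end

section
/- Let M ≥ 2 be an integer and N > 0 a real number, and define f(L) = (L + M²)/((N − (L + M))·(L + M)) for real L in the open interval (−M, N − M). Let L₀ = −M² + √(M·(M−1)·(M·(M−1) + N)), and assume L₀ < N − M. Then L₀ ∈ (−M, N − M) and for every L ∈ (−M, N − M) one has f(L₀) ≤ f(L); that is, f attains its minimum over (−M, N − M) at L₀. -/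
open Real

theorem stmt_13 (M : ℕ) (hM : 2 ≤ M) (N : ℝ) (hN : 0 < N)
    (f : ℝ → ℝ)
    (hf : ∀ L : ℝ, f L = (L + (M : ℝ) ^ 2) / ((N - (L + M)) * (L + M)))
    (L₀ : ℝ)
    (hL₀ : L₀ = -(M : ℝ) ^ 2 + Real.sqrt ((M : ℝ) * (M - 1) * ((M : ℝ) * (M - 1) + N)))
    (hlt : L₀ < N - M) :
    L₀ ∈ Set.Ioo (-(M : ℝ)) (N - M)
    ∧ ∀ L ∈ Set.Ioo (-(M : ℝ)) (N - M), f L₀ ≤ f L := by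
  have hM2 : (2 : ℝ) ≤ (M : ℝ) := by exact_mod_cast hM
  set a : ℝ := (M : ℝ) ^ 2 - M with ha_def
  have ha : 2 ≤ a := by nlinarith
  have harg : (M : ℝ) * (M - 1) * ((M : ℝ) * (M - 1) + N) = a * (a + N) := by
    rw [ha_def]; ring
  set s : ℝ := Real.sqrt ((M : ℝ) * (M - 1) * ((M : ℝ) * (M - 1) + N)) with hs_def
  have hs0 : 0 ≤ s := Real.sqrt_nonneg _
  have hs2 : s ^ 2 = a * (a + N) := by
    rw [hs_def, sq, Real.mul_self_sqrt]
    · exact harg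
    · rw [harg]; nlinarith
  have hsa : a < s := by nlinarith [sq_nonneg (s - a), sq_nonneg (s + a)]
  have hx0 : L₀ + M = s - a := by rw [hL₀, ha_def]; ring
  have hx0pos : 0 < L₀ + M := by rw [hx0]; linarith
  have hmem : L₀ ∈ Set.Ioo (-(M : ℝ)) (N - M) := ⟨by linarith, hlt⟩
  have hrel : (L₀ + M) ^ 2 = a * N - 2 * a * (L₀ + M) := by
    rw [hx0]; nlinarith [hs2]
  have hs_eq : L₀ + (M : ℝ) ^ 2 = s := by rw [hL₀]; ring
  refine ⟨hmem, fun L hL => ?_⟩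
  obtain ⟨hL1, hL2⟩ := hL
  have hd : 0 < (N - (L + M)) * (L + M) := by
    apply mul_pos <;> linarith
  have hd0 : 0 < (N - (L₀ + M)) * (L₀ + M) := by
    apply mul_pos <;> linarith
  rw [hf, hf, div_le_div_iff₀ hd0 hd]
  have key : (L + (M : ℝ) ^ 2) * ((N - (L₀ + M)) * (L₀ + M))
      - (L₀ + (M : ℝ) ^ 2) * ((N - (L + M)) * (L + M))
      = (L₀ + (M : ℝ) ^ 2) * (L - L₀) ^ 2 + (L - L₀) * ((L₀ + M) ^ 2 - (a * N - 2 * a * (L₀ + M))) := by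
    rw [ha_def]; ring
  nlinarith [key, hrel, mul_nonneg (by linarith [hs_eq] : (0:ℝ) ≤ L₀ + (M:ℝ)^2) (sq_nonneg (L - L₀))]
end

section
/- Let N ≥ 1, let x : {0,…,N−1} → ℂ be not identically zero, let T be the number of indices j with x_j ≠ 0, and define the discrete Fourier transform y_k = (1/√N)·∑_{j=0}^{N−1} x_j·exp(−2πi·j·k/N) for k = 0,…,N−1. Then y cannot have T consecutive zeros cyclically: for every t ∈ {0,…,N−1} there exists r with 0 ≤ r < T such that y_{(t+r) mod N} ≠ 0. -/
open Real Complex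

theorem stmt_14 (N : ℕ) (hN : 1 ≤ N) (x : Fin N → ℂ) (hx : x ≠ 0)
    (T : ℕ) (hT : T = (Finset.univ.filter fun j : Fin N => x j ≠ 0).card)
    (y : Fin N → ℂ)
    (hy : ∀ k : Fin N, y k = (1 / (Real.sqrt N : ℂ)) *
        ∑ j : Fin N, x j * Complex.exp (-2 * Real.pi * Complex.I * (j : ℕ) * (k : ℕ) / N)) :
    ∀ t : Fin N, ∃ r : ℕ, r < T ∧
      y ⟨((t : ℕ) + r) % N, Nat.mod_lt _ hN⟩ ≠ 0 := by
  intro t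
  by_contra hcon
  push_neg at hcon
  set S := Finset.univ.filter (fun j : Fin N => x j ≠ 0) with hS
  have hScard : S.card = T := hT.symm
  have hT0 : 0 < T := by
    rcases Function.ne_iff.mp hx with ⟨j, hj⟩
    have hjS : j ∈ S := by simp only [hS, Finset.mem_filter, Finset.mem_univ, true_and]; simpa using hj
    have := Finset.card_pos.mpr ⟨j, hjS⟩
    omega
  have hNne : (N : ℂ) ≠ 0 := by
    exact_mod_cast Nat.cast_ne_zero.mpr (by omega)
  set ω : ℂ := Complex.exp (-2 * Real.pi * Complex.I / N) with hω
  have hprim : IsPrimitiveRoot ω N := by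
    have h := Complex.isPrimitiveRoot_exp N (by omega)
    have h2 : ω = (Complex.exp (2 * Real.pi * Complex.I / N))⁻¹ := by
      rw [← Complex.exp_neg, hω]; congr 1; ring
    rw [h2]; exact h.inv
  have hωne : ω ≠ 0 := Complex.exp_ne_zero _
  have hpowmod : ∀ a : ℕ, ω ^ a = ω ^ (a % N) := by
    intro a
    conv_lhs => rw [← Nat.div_add_mod a N]
    rw [pow_add, pow_mul, hprim.pow_eq_one, one_pow, one_mul]
  have hcong : ∀ a b : ℕ, a % N = b % N → ω ^ a = ω ^ b := by
    intro a b h; rw [hpowmod a, hpowmod b, h]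
  have hexp : ∀ (j k : ℕ),
      Complex.exp (-2 * Real.pi * Complex.I * j * k / N) = ω ^ (j * k) := by
    intro j k
    rw [hω, ← Complex.exp_nat_mul]
    congr 1
    push_cast
    ring
  -- key vanishing sums
  have hsum : ∀ r : ℕ, r < T →
      ∑ j ∈ S, x j * ω ^ ((j : ℕ) * ((t : ℕ) + r)) = 0 := by
    intro r hr
    have h1 := hcon r hr
    rw [hy] at h1
    have hsqrt : (1 / (Real.sqrt N : ℂ)) ≠ 0 := by
      simp only [ne_eq, one_div, inv_eq_zero, Complex.ofReal_eq_zero]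
      have : (0:ℝ) < Real.sqrt N := Real.sqrt_pos.mpr (by exact_mod_cast Nat.pos_of_ne_zero (by omega))
      exact ne_of_gt this
    have h2 : ∑ j : Fin N, x j *
        Complex.exp (-2 * Real.pi * Complex.I * (j : ℕ) * ((((t : ℕ) + r) % N : ℕ) : ℂ) / N) = 0 := by
      rcases mul_eq_zero.mp h1 with h | h
      · exact absurd h hsqrt
      · exact h
    have h3 : ∑ j : Fin N, x j * ω ^ ((j : ℕ) * ((t : ℕ) + r)) = 0 := by
      rw [← h2]
      apply Finset.sum_congr rfl
      intro j _
      congr 1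
      rw [hexp]
      exact hcong _ _ ((Nat.ModEq.mul_left _ (Nat.mod_modEq _ _)).symm)
    rw [← h3]
    rw [Finset.sum_filter_of_ne]
    intro j _ hne
    intro hxj
    exact hne (by rw [hxj, zero_mul])
  -- Vandermonde setup
  set e := S.orderIsoOfFin hScard with he
  set s : Fin T → ℕ := fun i => ((e i : Fin N) : ℕ) with hs
  have hslt : ∀ i, s i < N := fun i => (e i : Fin N).isLt
  set v : Fin T → ℂ := fun i => ω ^ s i with hv
  have hvinj : Function.Injective v := by
    intro a b hab
    have h := hprim.pow_inj (hslt a) (hslt b) hab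
    have : (e a : Fin N) = (e b : Fin N) := Fin.val_injective h
    have : e a = e b := Subtype.ext this
    exact e.injective this
  set A : Matrix (Fin T) (Fin T) ℂ := (Matrix.vandermonde v).transpose with hA
  have hdet : A.det ≠ 0 := by
    rw [hA, Matrix.det_transpose, Matrix.det_vandermonde]
    rw [Finset.prod_ne_zero_iff]
    intro i _
    rw [Finset.prod_ne_zero_iff]
    intro j hj
    rw [Finset.mem_Ioi] at hj
    exact sub_ne_zero.mpr (fun hh => (ne_of_gt hj) (hvinj hh))
  set c : Fin T → ℂ := fun i => x (e i) * ω ^ (s i * (t : ℕ)) with hc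
  have hmv : A.mulVec c = 0 := by
    funext r
    have hr : (r : ℕ) < T := r.isLt
    have hkey := hsum r hr
    simp only [Matrix.mulVec, dotProduct, hA, Matrix.transpose_apply,
      Matrix.vandermonde, Matrix.of_apply, hc, Pi.zero_apply]
    have hSsum : ∑ j ∈ S, x j * ω ^ ((j : ℕ) * ((t : ℕ) + (r : ℕ)))
        = ∑ i : Fin T, x (e i) * ω ^ (s i * ((t : ℕ) + (r : ℕ))) := by
      rw [← Finset.sum_coe_sort S (fun j => x j * ω ^ ((j : ℕ) * ((t : ℕ) + (r : ℕ))))]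
      exact (Fintype.sum_equiv e.toEquiv _ _ (fun i => rfl)).symm
    rw [hSsum] at hkey
    rw [← hkey]
    apply Finset.sum_congr rfl
    intro i _
    have h1 : v i ^ (r : ℕ) = ω ^ (s i * (r : ℕ)) := by rw [hv, ← pow_mul]
    rw [h1, Nat.mul_add, pow_add]
    ring
  have hc0 : c = 0 := Matrix.eq_zero_of_mulVec_eq_zero hdet hmv
  set i0 : Fin T := ⟨0, hT0⟩ with hi0
  have hmem : (e i0 : Fin N) ∈ S := (e i0).2
  have hxne : x (e i0) ≠ 0 := (Finset.mem_filter.mp hmem).2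
  have := congrFun hc0 i0
  rw [hc] at this
  simp only [Pi.zero_apply] at this
  rcases mul_eq_zero.mp this with h | h
  · exact hxne h
  · exact pow_ne_zero _ hωne h
end

section
/- Let N ≥ 1 and let x : {0,…,N−1} → ℂ be not identically zero, with discrete Fourier transform y_k = (1/√N)·∑_{j=0}^{N−1} x_j·exp(−2πi·j·k/N). Let N_x be the number of indices j with x_j ≠ 0 and N_y be the number of indices k with y_k ≠ 0. Then N_x·N_y ≥ N. -/
open Real Complex

lemma exp_sum_orth (N : ℕ) (hN : 0 < N) (j j' : Fin N) :
    ∑ k : Fin N, Complex.exp (2 * Real.pi * Complex.I *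
      (((j : ℕ) : ℂ) - ((j' : ℕ) : ℂ)) * ((k : ℕ) : ℂ) / N)
      = if j = j' then (N : ℂ) else 0 := by
  have hNC : (N : ℂ) ≠ 0 := Nat.cast_ne_zero.mpr hN.ne'
  by_cases h : j = j'
  · simp [h, sub_self, Finset.card_univ]
  · simp only [if_neg h]
    set m : ℤ := (j : ℕ) - (j' : ℕ) with hm
    set r : ℂ := Complex.exp (2 * Real.pi * Complex.I * (m : ℂ) / N) with hr
    have hterm : ∀ k : Fin N, Complex.exp (2 * Real.pi * Complex.I *
        (((j : ℕ) : ℂ) - ((j' : ℕ) : ℂ)) * ((k : ℕ) : ℂ) / N) = r ^ (k : ℕ) := by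
      intro k
      rw [hr, ← Complex.exp_nat_mul]
      push_cast [hm]
      ring
    have hm0 : m ≠ 0 := by
      simp only [hm]
      intro hc
      exact h (Fin.ext (by omega))
    have hmlt : |m| < (N : ℤ) := by
      have := j.isLt; have := j'.isLt
      simp only [hm]
      rw [abs_lt]; omega
    have hr1 : r ≠ 1 := by
      rw [hr]
      intro hc
      rw [Complex.exp_eq_one_iff] at hc
      obtain ⟨n, hn⟩ := hc
      have h2 : (2 : ℂ) * Real.pi * Complex.I ≠ 0 := by
        simp [Real.pi_ne_zero, Complex.I_ne_zero]
      have hmn : (m : ℂ) = n * N := by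
        field_simp at hn
        apply mul_left_cancel₀ h2
        linear_combination (2 * (Real.pi : ℂ) * Complex.I) * hn
      have hmn' : m = n * N := by exact_mod_cast hmn
      have hdvd : (N : ℤ) ∣ m := ⟨n, by linarith [hmn']⟩
      have := Int.le_of_dvd (abs_pos.mpr hm0) ((dvd_abs _ _).mpr hdvd)
      omega
    have hrN : r ^ N = 1 := by
      rw [hr, ← Complex.exp_nat_mul]
      have : (N : ℂ) * (2 * Real.pi * Complex.I * (m : ℂ) / N) = m * (2 * Real.pi * Complex.I) := by
        field_simp
      rw [this, Complex.exp_int_mul_two_pi_mul_I]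
    rw [Finset.sum_congr rfl fun k _ => hterm k]
    rw [Fin.sum_univ_eq_sum_range (fun i => r ^ i)]
    rw [geom_sum_eq hr1, hrN]
    simp

lemma dft_inversion (N : ℕ) (hN : 0 < N) (x y : Fin N → ℂ)
    (hy : ∀ k : Fin N, y k = (1 / (Real.sqrt N : ℂ)) *
        ∑ j : Fin N, x j * Complex.exp (-2 * Real.pi * Complex.I * (j : ℕ) * (k : ℕ) / N))
    (j : Fin N) :
    x j = (1 / (Real.sqrt N : ℂ)) *
      ∑ k : Fin N, y k * Complex.exp (2 * Real.pi * Complex.I * (j : ℕ) * (k : ℕ) / N) := by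
  have hNC : (N : ℂ) ≠ 0 := Nat.cast_ne_zero.mpr hN.ne'
  have hsq : ((Real.sqrt N : ℝ) : ℂ) * ((Real.sqrt N : ℝ) : ℂ) = (N : ℂ) := by
    rw [← Complex.ofReal_mul, Real.mul_self_sqrt (Nat.cast_nonneg N)]
    simp
  have hstep : ∀ k : Fin N, y k * Complex.exp (2 * Real.pi * Complex.I * (j : ℕ) * (k : ℕ) / N)
      = (1 / (Real.sqrt N : ℂ)) * ∑ j' : Fin N, x j' *
        Complex.exp (2 * Real.pi * Complex.I * (((j : ℕ) : ℂ) - ((j' : ℕ) : ℂ)) * ((k : ℕ) : ℂ) / N) := by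
    intro k
    rw [hy k, mul_assoc, Finset.sum_mul]
    congr 1
    apply Finset.sum_congr rfl
    intro j' _
    rw [mul_assoc, ← Complex.exp_add]
    congr 2
    field_simp
    ring
  calc x j = (1 / (Real.sqrt N : ℂ)) * ((1 / (Real.sqrt N : ℂ)) *
      ∑ j' : Fin N, x j' * ∑ k : Fin N, Complex.exp (2 * Real.pi * Complex.I *
        (((j : ℕ) : ℂ) - ((j' : ℕ) : ℂ)) * ((k : ℕ) : ℂ) / N)) := by
        rw [Finset.sum_congr rfl fun j' _ => by rw [exp_sum_orth N hN j j']]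
        rw [Finset.sum_eq_single j (fun b _ hb => by rw [if_neg (fun h => hb h.symm), mul_zero])
          (fun h => absurd (Finset.mem_univ j) h)]
        rw [if_pos rfl]
        have hs0 : ((Real.sqrt N : ℝ) : ℂ) ≠ 0 := fun h => hNC (by rw [← hsq, h, mul_zero])
        have : (1 / ((Real.sqrt N : ℝ) : ℂ)) * ((1 / ((Real.sqrt N : ℝ) : ℂ)) * (x j * N))
            = x j * ((N : ℂ) / (((Real.sqrt N : ℝ) : ℂ) * ((Real.sqrt N : ℝ) : ℂ))) := by
          field_simp
        rw [this, hsq, div_self hNC, mul_one]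
    _ = (1 / (Real.sqrt N : ℂ)) * ((1 / (Real.sqrt N : ℂ)) *
      ∑ k : Fin N, ∑ j' : Fin N, x j' * Complex.exp (2 * Real.pi * Complex.I *
        (((j : ℕ) : ℂ) - ((j' : ℕ) : ℂ)) * ((k : ℕ) : ℂ) / N)) := by
        rw [← Finset.sum_comm]
        rw [Finset.sum_congr rfl fun j' _ => (Finset.mul_sum _ _ _)]
    _ = (1 / (Real.sqrt N : ℂ)) *
      ∑ k : Fin N, y k * Complex.exp (2 * Real.pi * Complex.I * (j : ℕ) * (k : ℕ) / N) := by
        rw [Finset.sum_congr rfl fun k _ => hstep k, ← Finset.mul_sum]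

lemma sum_abs_le_card_mul (N : ℕ) (f : Fin N → ℂ) (j0 : Fin N)
    (hj0 : ∀ j, ‖f j‖ ≤ ‖f j0‖) :
    ∑ j : Fin N, ‖f j‖ ≤
      ((Finset.univ.filter fun j : Fin N => f j ≠ 0).card : ℝ) * ‖f j0‖ := by
  have h1 : ∑ j : Fin N, ‖f j‖
      = ∑ j ∈ Finset.univ.filter (fun j : Fin N => f j ≠ 0), ‖f j‖ := by
    refine (Finset.sum_subset (Finset.filter_subset _ _) ?_).symm
    intro j _ hj
    simp only [Finset.mem_filter, Finset.mem_univ, true_and, not_not] at hj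
    simp [hj]
  rw [h1]
  calc ∑ j ∈ Finset.univ.filter (fun j : Fin N => f j ≠ 0), ‖f j‖
      ≤ (Finset.univ.filter (fun j : Fin N => f j ≠ 0)).card • ‖f j0‖ :=
        Finset.sum_le_card_nsmul _ _ _ (fun j _ => hj0 j)
    _ = _ := nsmul_eq_mul _ _

theorem stmt_15 (N : ℕ) (hN : 1 ≤ N) (x : Fin N → ℂ) (hx : x ≠ 0)
    (y : Fin N → ℂ)
    (hy : ∀ k : Fin N, y k = (1 / (Real.sqrt N : ℂ)) *
        ∑ j : Fin N, x j * Complex.exp (-2 * Real.pi * Complex.I * (j : ℕ) * (k : ℕ) / N))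
    (Nx Ny : ℕ)
    (hNx : Nx = (Finset.univ.filter fun j : Fin N => x j ≠ 0).card)
    (hNy : Ny = (Finset.univ.filter fun k : Fin N => y k ≠ 0).card) :
    N ≤ Nx * Ny := by
  have hN0 : (0 : ℝ) < N := by exact_mod_cast hN
  have hs : (0 : ℝ) < Real.sqrt N := Real.sqrt_pos.mpr hN0
  have hss : Real.sqrt N * Real.sqrt N = N := Real.mul_self_sqrt hN0.le
  have habs1 : ‖1 / ((Real.sqrt N : ℝ) : ℂ)‖ = 1 / Real.sqrt N := by
    rw [norm_div, norm_one, Complex.norm_real, Real.norm_eq_abs, _root_.abs_of_nonneg hs.le]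
  obtain ⟨j0, -, hj0⟩ := Finset.exists_max_image (Finset.univ : Finset (Fin N))
    (fun j => ‖x j‖) ⟨⟨0, hN⟩, Finset.mem_univ _⟩
  obtain ⟨k0, -, hk0⟩ := Finset.exists_max_image (Finset.univ : Finset (Fin N))
    (fun k => ‖y k‖) ⟨⟨0, hN⟩, Finset.mem_univ _⟩
  have hj0' : ∀ j, ‖x j‖ ≤ ‖x j0‖ := fun j => hj0 j (Finset.mem_univ j)
  have hk0' : ∀ k, ‖y k‖ ≤ ‖y k0‖ := fun k => hk0 k (Finset.mem_univ k)
  have hMx : 0 < ‖x j0‖ := by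
    obtain ⟨j, hj⟩ := Function.ne_iff.mp hx
    exact lt_of_lt_of_le (by simpa using hj) (hj0' j)
  -- bound |y k| ≤ Nx * |x j0| / √N
  have hyb : ∀ k : Fin N, ‖y k‖ ≤ (Nx : ℝ) * ‖x j0‖ / Real.sqrt N := by
    intro k
    rw [hy k, norm_mul, habs1]
    have h2 : ‖∑ j : Fin N, x j *
        Complex.exp (-2 * Real.pi * Complex.I * (j : ℕ) * (k : ℕ) / N)‖
        ≤ (Nx : ℝ) * ‖x j0‖ := by
      refine le_trans (norm_sum_le _ _) ?_
      have : ∀ j : Fin N, ‖x j *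
          Complex.exp (-2 * Real.pi * Complex.I * (j : ℕ) * (k : ℕ) / N)‖ = ‖x j‖ := by
        intro j
        rw [norm_mul]
        have harg : (-2 * (Real.pi : ℂ) * Complex.I * ((j : ℕ) : ℂ) * ((k : ℕ) : ℂ) / (N : ℂ))
            = ((-2 * Real.pi * (j : ℕ) * (k : ℕ) / N : ℝ) : ℂ) * Complex.I := by
          push_cast; ring
        rw [harg, Complex.norm_exp_ofReal_mul_I, mul_one]
      rw [Finset.sum_congr rfl fun j _ => this j, hNx]
      exact sum_abs_le_card_mul N x j0 hj0'
    calc 1 / Real.sqrt N * ‖∑ j : Fin N, x j *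
          Complex.exp (-2 * Real.pi * Complex.I * (j : ℕ) * (k : ℕ) / N)‖
        ≤ 1 / Real.sqrt N * ((Nx : ℝ) * ‖x j0‖) := by
          exact mul_le_mul_of_nonneg_left h2 (by positivity)
      _ = (Nx : ℝ) * ‖x j0‖ / Real.sqrt N := by ring
  -- bound |x j| ≤ Ny * |y k0| / √N
  have hxb : ‖x j0‖ ≤ (Ny : ℝ) * ‖y k0‖ / Real.sqrt N := by
    rw [dft_inversion N hN x y hy j0, norm_mul, habs1]
    have h2 : ‖∑ k : Fin N, y k *
        Complex.exp (2 * Real.pi * Complex.I * (j0 : ℕ) * (k : ℕ) / N)‖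
        ≤ (Ny : ℝ) * ‖y k0‖ := by
      refine le_trans (norm_sum_le _ _) ?_
      have : ∀ k : Fin N, ‖y k *
          Complex.exp (2 * Real.pi * Complex.I * (j0 : ℕ) * (k : ℕ) / N)‖ = ‖y k‖ := by
        intro k
        rw [norm_mul]
        have harg : (2 * (Real.pi : ℂ) * Complex.I * ((j0 : ℕ) : ℂ) * ((k : ℕ) : ℂ) / (N : ℂ))
            = ((2 * Real.pi * (j0 : ℕ) * (k : ℕ) / N : ℝ) : ℂ) * Complex.I := by
          push_cast; ring
        rw [harg, Complex.norm_exp_ofReal_mul_I, mul_one]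
      rw [Finset.sum_congr rfl fun k _ => this k, hNy]
      exact sum_abs_le_card_mul N y k0 hk0'
    calc 1 / Real.sqrt N * ‖∑ k : Fin N, y k *
          Complex.exp (2 * Real.pi * Complex.I * (j0 : ℕ) * (k : ℕ) / N)‖
        ≤ 1 / Real.sqrt N * ((Ny : ℝ) * ‖y k0‖) := by
          exact mul_le_mul_of_nonneg_left h2 (by positivity)
      _ = (Ny : ℝ) * ‖y k0‖ / Real.sqrt N := by ring
  have hfinal : (N : ℝ) ≤ (Nx : ℝ) * (Ny : ℝ) := by
    have h4 : ‖x j0‖ * Real.sqrt N ≤ (Ny : ℝ) * ‖y k0‖ :=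
      (le_div_iff₀ hs).mp hxb
    have h5 : ‖y k0‖ * Real.sqrt N ≤ (Nx : ℝ) * ‖x j0‖ :=
      (le_div_iff₀ hs).mp (hyb k0)
    nlinarith [hs, hMx, hss, mul_le_mul_of_nonneg_right h4 hs.le,
      mul_le_mul_of_nonneg_left h5 (Nat.cast_nonneg (α := ℝ) Ny),
      norm_nonneg (y k0), Nat.cast_nonneg (α := ℝ) Nx, Nat.cast_nonneg (α := ℝ) Ny]
  exact_mod_cast hfinal
end

section
/- Let N ≥ 1, let A be a subset of {0,…,N−1} with |A| = M ≥ 1, let a, b be complex numbers with a ≠ b and M·a + (N−M)·b ≠ 0, and define x_j = a if j ∈ A and x_j = b otherwise. Let y_k = (1/√N)·∑_{j=0}^{N−1} x_j·exp(−2πi·j·k/N) be the discrete Fourier transform of x, and let N_y be the number of indices k with y_k ≠ 0. Then M·N_y ≥ N. -/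
open Real Complex

open Finset in
lemma norm_stdAddChar {N : ℕ} [NeZero N] (z : ZMod N) : ‖ZMod.stdAddChar z‖ = 1 := by
  rw [ZMod.stdAddChar_apply, Circle.norm_coe]

open Finset in
lemma norm_dft_le {N : ℕ} [NeZero N] (f : ZMod N → ℂ) (k : ZMod N) :
    ‖ZMod.dft f k‖ ≤ ∑ j ∈ Finset.univ.filter (fun j => f j ≠ 0), ‖f j‖ := by
  rw [ZMod.dft_apply]
  calc ‖∑ j, ZMod.stdAddChar (-(j * k)) • f j‖
      ≤ ∑ j, ‖ZMod.stdAddChar (-(j * k)) • f j‖ := norm_sum_le _ _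
    _ = ∑ j, ‖f j‖ := by
        refine Finset.sum_congr rfl fun j _ => ?_
        rw [norm_smul, norm_stdAddChar, one_mul]
    _ = ∑ j ∈ Finset.univ.filter (fun j => f j ≠ 0), ‖f j‖ := by
        refine (Finset.sum_subset (Finset.filter_subset _ _) ?_).symm
        intro j _ hj
        simp only [Finset.mem_filter, Finset.mem_univ, true_and, not_not] at hj
        simp [hj]

open Finset in
lemma donoho {N : ℕ} [NeZero N] (u : ZMod N → ℂ) (hu : u ≠ 0) :
    N ≤ (Finset.univ.filter fun j => u j ≠ 0).card *
      (Finset.univ.filter fun k => ZMod.dft u k ≠ 0).card := by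
  set S := Finset.univ.filter fun j => u j ≠ 0 with hS
  set T := Finset.univ.filter fun k => ZMod.dft u k ≠ 0 with hT
  obtain ⟨j₀, -, hj₀⟩ := Finset.exists_max_image (Finset.univ : Finset (ZMod N))
    (fun j => ‖u j‖) ⟨0, Finset.mem_univ 0⟩
  set C := ‖u j₀‖ with hC
  have hCpos : 0 < C := by
    obtain ⟨j, hj⟩ := Function.ne_iff.mp hu
    exact lt_of_lt_of_le (norm_pos_iff.mpr hj) (hj₀ j (Finset.mem_univ j))
  have h1 : ∀ k, ‖ZMod.dft u k‖ ≤ (S.card : ℝ) * C := by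
    intro k
    refine (norm_dft_le u k).trans ?_
    calc ∑ j ∈ S, ‖u j‖ ≤ ∑ _j ∈ S, C :=
          Finset.sum_le_sum fun j _ => hj₀ j (Finset.mem_univ j)
      _ = (S.card : ℝ) * C := by rw [Finset.sum_const, nsmul_eq_mul]
  have h2 : (N : ℝ) * C ≤ (T.card : ℝ) * ((S.card : ℝ) * C) := by
    have e1 : (N : ℝ) * C = ‖ZMod.dft (ZMod.dft u) (-j₀)‖ := by
      rw [ZMod.dft_dft]
      simp only [neg_neg, norm_smul, Complex.norm_natCast]
      rw [hC]
    rw [e1]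
    refine (norm_dft_le (ZMod.dft u) (-j₀)).trans ?_
    calc ∑ k ∈ T, ‖ZMod.dft u k‖ ≤ ∑ _k ∈ T, (S.card : ℝ) * C :=
          Finset.sum_le_sum fun k _ => h1 k
      _ = (T.card : ℝ) * ((S.card : ℝ) * C) := by rw [Finset.sum_const, nsmul_eq_mul]
  have h3 : (N : ℝ) ≤ (S.card : ℝ) * (T.card : ℝ) := by
    have := le_of_mul_le_mul_right (by linarith [h2] : (N : ℝ) * C ≤ (T.card : ℝ) * (S.card : ℝ) * C) hCpos
    linarith
  exact_mod_cast h3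

theorem stmt_16 (N : ℕ) (hN : 1 ≤ N) (A : Finset (Fin N)) (M : ℕ)
    (hA : A.card = M) (hM : 1 ≤ M)
    (a b : ℂ) (hab : a ≠ b) (h0 : (M : ℂ) * a + ((N : ℂ) - M) * b ≠ 0)
    (x : Fin N → ℂ) (hx : ∀ j : Fin N, x j = if j ∈ A then a else b)
    (y : Fin N → ℂ)
    (hy : ∀ k : Fin N, y k = (1 / (Real.sqrt N : ℂ)) *
        ∑ j : Fin N, x j * Complex.exp (-2 * Real.pi * Complex.I * (j : ℕ) * (k : ℕ) / N))
    (Ny : ℕ) (hNy : Ny = (Finset.univ.filter fun k : Fin N => y k ≠ 0).card) :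
    N ≤ M * Ny := by
  haveI : NeZero N := ⟨by omega⟩
  have hNR : (Real.sqrt N : ℂ) ≠ 0 := by
    simp only [ne_eq, Complex.ofReal_eq_zero]
    positivity
  -- the equivalence between `Fin N` and `ZMod N`
  let e : Fin N ≃ ZMod N :=
    { toFun := fun j => (j.val : ZMod N)
      invFun := fun k => ⟨k.val, k.val_lt⟩
      left_inv := fun j => by
        ext; simp [ZMod.val_natCast_of_lt j.isLt]
      right_inv := fun k => by simp [ZMod.natCast_zmod_val] }
  have he_val : ∀ k : ZMod N, ((e.symm k : Fin N) : ℕ) = k.val := fun k => rfl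
  -- the shifted function
  set u : ZMod N → ℂ := fun j => x (e.symm j) - b with hu_def
  have hux : ∀ j : ZMod N, u j = if e.symm j ∈ A then a - b else 0 := by
    intro j
    rw [hu_def]
    simp only [hx (e.symm j)]
    split_ifs <;> ring
  have hSA : (Finset.univ.filter fun j : ZMod N => u j ≠ 0) = A.map ⟨e, e.injective⟩ := by
    ext j
    simp only [Finset.mem_filter, Finset.mem_univ, true_and, Finset.mem_map,
      Function.Embedding.coeFn_mk, hux j, ne_eq]
    constructor
    · intro h
      by_cases hj : e.symm j ∈ A
      · exact ⟨e.symm j, hj, e.apply_symm_apply j⟩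
      · simp [hj] at h
    · rintro ⟨i, hi, rfl⟩
      simp [e.symm_apply_apply, hi, sub_eq_zero, hab]
  have hScard : (Finset.univ.filter fun j : ZMod N => u j ≠ 0).card = M := by
    rw [hSA, Finset.card_map, hA]
  have hu0 : u ≠ 0 := by
    intro h
    have hA0 : A.Nonempty := Finset.card_pos.mp (by omega)
    obtain ⟨i, hi⟩ := hA0
    have := congrFun h (e i)
    rw [hux] at this
    simp [e.symm_apply_apply, hi, sub_eq_zero] at this
    exact hab this
  -- value of the DFT at nonzero frequencies
  have key : ∀ k : ZMod N, k ≠ 0 → ZMod.dft u k = (Real.sqrt N : ℂ) * y (e.symm k) := by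
    intro k hk
    have hchar : ∀ j : Fin N, ZMod.stdAddChar (-(((j : ℕ) : ZMod N) * k)) =
        Complex.exp (-2 * Real.pi * Complex.I * (j : ℕ) * k.val / N) := by
      intro j
      have : (-(((j : ℕ) : ZMod N) * k)) = (((-((j : ℕ) * k.val) : ℤ)) : ZMod N) := by
        push_cast
        rw [ZMod.natCast_zmod_val]
      rw [this, ZMod.stdAddChar_coe]
      congr 1
      push_cast
      ring
    have hsum0 : ∑ j : ZMod N, ZMod.stdAddChar (-(j * k)) = 0 := by
      have hprim := ZMod.isPrimitive_stdAddChar N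
      have hne : (-k) ≠ 0 := neg_ne_zero.mpr hk
      have := AddChar.sum_eq_zero_of_ne_one (hprim hne)
      rw [← this]
      refine Finset.sum_congr rfl fun j _ => ?_
      rw [AddChar.mulShift_apply]
      ring_nf
    rw [ZMod.dft_apply]
    have expand : ∀ j : ZMod N, ZMod.stdAddChar (-(j * k)) • u j =
        ZMod.stdAddChar (-(j * k)) * x (e.symm j) - b * ZMod.stdAddChar (-(j * k)) := by
      intro j
      rw [hu_def]
      simp only [smul_eq_mul]
      ring
    rw [Finset.sum_congr rfl fun j _ => expand j, Finset.sum_sub_distrib,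
      ← Finset.mul_sum, hsum0, mul_zero, sub_zero]
    rw [hy (e.symm k), ← mul_assoc, mul_one_div, div_self hNR, one_mul]
    rw [← Equiv.sum_comp e (fun j : ZMod N => ZMod.stdAddChar (-(j * k)) * x (e.symm j))]
    refine Finset.sum_congr rfl fun j _ => ?_
    rw [e.symm_apply_apply]
    have : (e j : ZMod N) = ((j : ℕ) : ZMod N) := rfl
    rw [this, hchar j, he_val k, mul_comm]
  -- y at frequency 0 is nonzero
  have hy0 : y (e.symm 0) ≠ 0 := by
    have hval0 : ((e.symm (0 : ZMod N) : Fin N) : ℕ) = 0 := by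
      rw [he_val, ZMod.val_zero]
    rw [hy (e.symm 0), hval0]
    have hsum : ∑ j : Fin N, x j * Complex.exp (-2 * Real.pi * Complex.I * (j : ℕ) * (0 : ℕ) / N)
        = (M : ℂ) * a + ((N : ℂ) - M) * b := by
      have : ∀ j : Fin N, x j * Complex.exp (-2 * Real.pi * Complex.I * (j : ℕ) * (0 : ℕ) / N)
          = x j := by
        intro j
        simp [Complex.exp_zero]
      rw [Finset.sum_congr rfl fun j _ => this j]
      have hMN : M ≤ N := by rw [← hA]; simpa using A.card_le_univ
      rw [← Finset.sum_filter_add_sum_filter_not Finset.univ (· ∈ A)]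
      have h1 : ∑ j ∈ Finset.univ.filter (· ∈ A), x j = (M : ℂ) * a := by
        have hconst : ∀ j ∈ Finset.univ.filter (· ∈ A), x j = a := by
          intro j hj
          simp only [Finset.mem_filter, Finset.mem_univ, true_and] at hj
          rw [hx j, if_pos hj]
        rw [Finset.sum_congr rfl hconst, Finset.sum_const, Finset.filter_mem_eq_inter,
          Finset.univ_inter, hA, nsmul_eq_mul]
      have h2 : ∑ j ∈ Finset.univ.filter (¬ · ∈ A), x j = ((N : ℂ) - M) * b := by
        have hconst : ∀ j ∈ Finset.univ.filter (¬ · ∈ A), x j = b := by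
          intro j hj
          simp only [Finset.mem_filter, Finset.mem_univ, true_and] at hj
          rw [hx j, if_neg hj]
        rw [Finset.sum_congr rfl hconst, Finset.sum_const, nsmul_eq_mul]
        congr 1
        have : (Finset.univ.filter (¬ · ∈ A)).card = N - M := by
          have := Finset.card_filter_add_card_filter_not (s := Finset.univ)
            (p := (· ∈ A))
          simp only [Finset.filter_mem_eq_inter, Finset.univ_inter, hA,
            Finset.card_univ, Fintype.card_fin] at this
          omega
        rw [this, Nat.cast_sub hMN]
      rw [h1, h2]
    rw [hsum]
    exact mul_ne_zero (by simpa using hNR) h0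
  -- bounding the support of the DFT of u by Ny
  have hmem0 : e.symm 0 ∈ Finset.univ.filter fun k : Fin N => y k ≠ 0 := by
    simp [hy0]
  have hNy1 : 1 ≤ Ny := by
    rw [hNy]
    exact Finset.card_pos.mpr ⟨e.symm 0, hmem0⟩
  have hTcard : (Finset.univ.filter fun k : ZMod N => ZMod.dft u k ≠ 0).card ≤ Ny := by
    have hsub : (Finset.univ.filter fun k : ZMod N => ZMod.dft u k ≠ 0) ⊆
        insert (0 : ZMod N)
          ((((Finset.univ.filter fun k : Fin N => y k ≠ 0)).erase (e.symm 0)).map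
            ⟨e, e.injective⟩) := by
      intro k hk
      simp only [Finset.mem_filter, Finset.mem_univ, true_and] at hk
      by_cases hk0 : k = 0
      · simp [hk0]
      · refine Finset.mem_insert.mpr (Or.inr ?_)
        simp only [Finset.mem_map, Function.Embedding.coeFn_mk]
        refine ⟨e.symm k, ?_, e.apply_symm_apply k⟩
        rw [Finset.mem_erase]
        constructor
        · exact fun h => hk0 (e.symm.injective h)
        · simp only [Finset.mem_filter, Finset.mem_univ, true_and]
          intro hyk
          apply hk
          rw [key k hk0, hyk, mul_zero]
    calc (Finset.univ.filter fun k : ZMod N => ZMod.dft u k ≠ 0).card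
        ≤ _ := Finset.card_le_card hsub
      _ ≤ 1 + (((Finset.univ.filter fun k : Fin N => y k ≠ 0)).erase (e.symm 0)).card := by
          exact (Finset.card_insert_le _ _).trans (by rw [Finset.card_map]; omega)
      _ = 1 + (Ny - 1) := by rw [Finset.card_erase_of_mem hmem0, ← hNy]
      _ = Ny := by omega
  calc N ≤ (Finset.univ.filter fun j : ZMod N => u j ≠ 0).card *
        (Finset.univ.filter fun k : ZMod N => ZMod.dft u k ≠ 0).card := donoho u hu0
    _ = M * (Finset.univ.filter fun k : ZMod N => ZMod.dft u k ≠ 0).card := by rw [hScard]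
    _ ≤ M * Ny := Nat.mul_le_mul_left M hTcard
end

section
/- Let s, P, P₁, M be natural numbers with P ≥ 1, P₁ ≥ 1 and M ≥ 2, and let A = { s + r·P : r = 0, 1, …, M−1 }. If s + P₁ ∈ A and s + (M−1)·P₁ ∈ A, then P₁ = P. -/
theorem stmt_17 (s P P₁ M : ℕ) (hP : 1 ≤ P) (hP₁ : 1 ≤ P₁) (hM : 2 ≤ M)
    (A : Set ℕ) (hA : A = {n : ℕ | ∃ r, r < M ∧ n = s + r * P})
    (h1 : s + P₁ ∈ A) (h2 : s + (M - 1) * P₁ ∈ A) :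
    P₁ = P := by
  subst hA
  obtain ⟨r₁, hr₁, e₁⟩ := h1
  obtain ⟨r₂, hr₂, e₂⟩ := h2
  have e₁' : P₁ = r₁ * P := by omega
  have e₂' : (M - 1) * P₁ = r₂ * P := by omega
  rw [e₁', ← mul_assoc] at e₂'
  have hPpos : 0 < P := hP
  have key : (M - 1) * r₁ = r₂ := Nat.eq_of_mul_eq_mul_right hPpos e₂'
  have hr₁pos : 1 ≤ r₁ := by
    rcases Nat.eq_zero_or_pos r₁ with h | h
    · simp [h] at e₁'; omega
    · exact h
  have : r₁ = 1 := by
    by_contra h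
    have h2 : 2 ≤ r₁ := by omega
    have : (M - 1) * 2 ≤ (M - 1) * r₁ := Nat.mul_le_mul_left _ h2
    omega
  simp [this] at e₁'
  exact e₁'
end

section
/- Let N, P, y, d be natural numbers with N ≥ 1, P ≥ 1, P² ≤ N, gcd(d, P) = 1, and 2·|P·y − N·d| ≤ P (equivalently |y/N − d/P| ≤ 1/(2N) ≤ 1/(2P²)). Then d/P is a convergent of the continued fraction expansion of the rational number y/N; that is, there exists an index n such that the n-th convergent of the continued fraction of y/N equals d/P. -/
open GenContFract

lemma convs_coe_real (x : ℚ) (n : ℕ) :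
    ((GenContFract.of x).convs n : ℝ) = (GenContFract.of (x : ℝ)).convs n := by
  induction n generalizing x with
  | zero =>
      simp [GenContFract.zeroth_conv_eq_h, GenContFract.of_h_eq_floor]
  | succ n ih =>
      rw [GenContFract.convs_succ, GenContFract.convs_succ]
      rw [← Rat.cast_fract, ← Rat.cast_inv, ← ih]
      push_cast
      norm_num

theorem stmt_18 (N P y d : ℕ) (hN : 1 ≤ N) (hP : 1 ≤ P) (hPN : P ^ 2 ≤ N)
    (hgcd : Nat.gcd d P = 1)
    (hres : 2 * |(P : ℤ) * y - (N : ℤ) * d| ≤ (P : ℤ)) :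
    ∃ n : ℕ, (GenContFract.of ((y : ℚ) / N)).convs n = (d : ℚ) / P := by
  set q : ℚ := (d : ℚ) / P with hq
  have hP0 : (0 : ℤ) < (P : ℤ) := by exact_mod_cast hP
  have hN0 : (0 : ℤ) < (N : ℤ) := by exact_mod_cast hN
  have hden : q.den = P := by
    have := Rat.den_div_eq_of_coprime (a := (d : ℤ)) (b := (P : ℤ)) hP0
      (by simpa [Int.natAbs_natCast] using hgcd)
    simpa using this
  -- key strict integer inequality
  have key : 2 * |(P : ℤ) * y - (N : ℤ) * d| * (P : ℤ) ^ 2 < (N : ℤ) * (P : ℤ) := by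
    set A : ℤ := |(P : ℤ) * y - (N : ℤ) * d| with hAdef
    have hA0 : 0 ≤ A := abs_nonneg _
    have h2A : 2 * A ≤ (P : ℤ) := hres
    have hPN' : ((P : ℤ)) ^ 2 ≤ (N : ℤ) := by exact_mod_cast hPN
    rcases lt_or_eq_of_le h2A with h | h
    · nlinarith
    · rcases lt_or_eq_of_le hPN' with h' | h'
      · nlinarith
      · -- N = P^2 and P = 2A : parity contradiction
        exfalso
        have hA1 : 1 ≤ A := by omega
        have hNe : (N : ℤ) = 4 * A ^ 2 := by rw [← h', ← h]; ring
        have habs : (P : ℤ) * y - (N : ℤ) * d = A ∨ (P : ℤ) * y - (N : ℤ) * d = -A := by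
          rcases abs_cases ((P : ℤ) * y - (N : ℤ) * d) with ⟨h1, _⟩ | ⟨h1, _⟩
          · left; omega
          · right; omega
        rcases habs with h1 | h1
        · have hz : A * (2 * (y : ℤ) - 4 * A * d - 1) = 0 := by
            rw [← h] at h1
            nlinarith [h1, hNe]
          have h2 : 2 * (y : ℤ) - 4 * A * d - 1 = 0 :=
            (mul_eq_zero.mp hz).resolve_left (by omega)
          have : (2 : ℤ) ∣ 1 := ⟨(y : ℤ) - 2 * A * d, by linarith⟩
          norm_num at this
        · have hz : A * (2 * (y : ℤ) - 4 * A * d + 1) = 0 := by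
            rw [← h] at h1
            nlinarith [h1, hNe]
          have h2 : 2 * (y : ℤ) - 4 * A * d + 1 = 0 :=
            (mul_eq_zero.mp hz).resolve_left (by omega)
          have : (2 : ℤ) ∣ 1 := ⟨-((y : ℤ) - 2 * A * d), by linarith⟩
          norm_num at this
  -- rational inequality
  have hPq : (0 : ℚ) < (P : ℚ) := by exact_mod_cast hP
  have hNq : (0 : ℚ) < (N : ℚ) := by exact_mod_cast hN
  have keyQ : 2 * |(P : ℚ) * y - (N : ℚ) * d| * (P : ℚ) ^ 2 < (N : ℚ) * (P : ℚ) := by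
    exact_mod_cast key
  have hratQ : |(y : ℚ) / N - q| < 1 / (2 * (P : ℚ) ^ 2) := by
    have e : (y : ℚ) / N - q = ((P : ℚ) * y - (N : ℚ) * d) / ((N : ℚ) * P) := by
      rw [hq]
      field_simp
    rw [e, abs_div, abs_of_pos (mul_pos hNq hPq),
      div_lt_div_iff₀ (mul_pos hNq hPq) (by positivity)]
    nlinarith [abs_nonneg ((P : ℚ) * y - (N : ℚ) * d)]
  have hreal : |(((y : ℚ) / N : ℚ) : ℝ) - (q : ℝ)| < 1 / (2 * (q.den : ℝ) ^ 2) := by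
    rw [hden]
    have h2 : ((1 / (2 * (P : ℚ) ^ 2) : ℚ) : ℝ) = 1 / (2 * (P : ℝ) ^ 2) := by
      push_cast; ring
    rw [← h2, ← Rat.cast_sub, ← Rat.cast_abs, Rat.cast_lt]
    exact hratQ
  obtain ⟨n, hn⟩ := Real.exists_convs_eq_rat hreal
  refine ⟨n, ?_⟩
  have := convs_coe_real ((y : ℚ) / N) n
  rw [hn] at this
  exact_mod_cast this
end

section
/- Let N ≥ 1 be an integer, let A be a subset of {0,…,N−1} with |A| = M, let p : {0,…,N−1} → ℝ be nonnegative with ∑_{z=0}^{N−1} p_z = 1 and ∑_{z ∈ A} p_z = α, and let u : {0,…,N−1} → ℂ satisfy |u_z| = 1 for every z. Then |(1/√N)·∑_{z=0}^{N−1} √(p_z)·u_z|² ≤ ( √(α·M/N) + √((1−α)·(1 − M/N)) )². -/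
open Real Complex

theorem stmt_19 (N : ℕ) (hN : 1 ≤ N) (A : Finset (Fin N)) (M : ℕ) (hA : A.card = M)
    (p : Fin N → ℝ) (hp : ∀ z, 0 ≤ p z) (hsum : ∑ z : Fin N, p z = 1)
    (α : ℝ) (hα : ∑ z ∈ A, p z = α)
    (u : Fin N → ℂ) (hu : ∀ z, ‖u z‖ = 1) :
    ‖(1 / (Real.sqrt N : ℂ)) *
        ∑ z : Fin N, (Real.sqrt (p z) : ℂ) * u z‖ ^ 2
      ≤ (Real.sqrt (α * M / N) + Real.sqrt ((1 - α) * (1 - (M : ℝ) / N))) ^ 2 := by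
  have hN0 : (0:ℝ) < N := by exact_mod_cast hN
  have hα0 : 0 ≤ α := hα ▸ Finset.sum_nonneg fun z _ => hp z
  have hα1 : α ≤ 1 := by
    rw [← hα, ← hsum]
    exact Finset.sum_le_sum_of_subset_of_nonneg (Finset.subset_univ A)
      fun z _ _ => hp z
  have hMN : (M:ℝ) ≤ N := by
    have := A.card_le_univ
    simp [hA] at this
    exact_mod_cast this
  set S1 := ∑ z ∈ A, Real.sqrt (p z) with hS1
  set S2 := ∑ z ∈ Aᶜ, Real.sqrt (p z) with hS2
  have hS1nn : 0 ≤ S1 := Finset.sum_nonneg fun z _ => Real.sqrt_nonneg _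
  have hS2nn : 0 ≤ S2 := Finset.sum_nonneg fun z _ => Real.sqrt_nonneg _
  have hS1sq : S1 ^ 2 ≤ M * α := by
    have h := sq_sum_le_card_mul_sum_sq (s := A) (f := fun z => Real.sqrt (p z))
    have hps : ∑ z ∈ A, Real.sqrt (p z) ^ 2 = α := by
      rw [← hα]
      exact Finset.sum_congr rfl fun z _ => Real.sq_sqrt (hp z)
    rw [hps, hA] at h
    exact h
  have hcompl : ∑ z ∈ Aᶜ, p z = 1 - α := by
    have := Finset.sum_add_sum_compl A p
    rw [hα, hsum] at this
    linarith
  have hS2sq : S2 ^ 2 ≤ ((N:ℝ) - M) * (1 - α) := by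
    have h := sq_sum_le_card_mul_sum_sq (s := Aᶜ) (f := fun z => Real.sqrt (p z))
    have hps : ∑ z ∈ Aᶜ, Real.sqrt (p z) ^ 2 = 1 - α := by
      rw [← hcompl]
      exact Finset.sum_congr rfl fun z _ => Real.sq_sqrt (hp z)
    have hcard : ((Aᶜ.card : ℕ) : ℝ) = (N:ℝ) - M := by
      rw [Finset.card_compl, hA, Fintype.card_fin]
      have : M ≤ N := by exact_mod_cast hMN
      push_cast [Nat.cast_sub this]
      ring
    rw [hps, hcard] at h
    exact h
  have hS1le : S1 ≤ Real.sqrt (M * α) := by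
    have := Real.sqrt_le_sqrt hS1sq
    rwa [Real.sqrt_sq hS1nn] at this
  have hS2le : S2 ≤ Real.sqrt (((N:ℝ) - M) * (1 - α)) := by
    have := Real.sqrt_le_sqrt hS2sq
    rwa [Real.sqrt_sq hS2nn] at this
  -- triangle inequality
  have habs : ‖∑ z : Fin N, (Real.sqrt (p z) : ℂ) * u z‖
      ≤ S1 + S2 := by
    calc ‖∑ z : Fin N, (Real.sqrt (p z) : ℂ) * u z‖
        ≤ ∑ z : Fin N, ‖(Real.sqrt (p z) : ℂ) * u z‖ :=
          norm_sum_le _ _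
      _ = ∑ z : Fin N, Real.sqrt (p z) := by
          refine Finset.sum_congr rfl fun z _ => ?_
          rw [norm_mul, hu z, mul_one, Complex.norm_real, Real.norm_eq_abs,
            _root_.abs_of_nonneg (Real.sqrt_nonneg _)]
      _ = S1 + S2 := (Finset.sum_add_sum_compl A _).symm
  have hmain : ‖(1 / (Real.sqrt N : ℂ)) *
      ∑ z : Fin N, (Real.sqrt (p z) : ℂ) * u z‖
      ≤ Real.sqrt (α * M / N) + Real.sqrt ((1 - α) * (1 - (M : ℝ) / N)) := by
    rw [norm_mul]
    have h1 : ‖1 / (Real.sqrt N : ℂ)‖ = 1 / Real.sqrt N := by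
      rw [norm_div, norm_one, Complex.norm_real, Real.norm_eq_abs,
        _root_.abs_of_nonneg (Real.sqrt_nonneg _)]
    rw [h1]
    have hsqN : 0 < Real.sqrt N := Real.sqrt_pos.mpr hN0
    have key : (1 / Real.sqrt N) * (S1 + S2)
        ≤ Real.sqrt (α * M / N) + Real.sqrt ((1 - α) * (1 - (M : ℝ) / N)) := by
      have e1 : Real.sqrt (α * M / N) = Real.sqrt (M * α) / Real.sqrt N := by
        rw [mul_comm (M:ℝ) α, Real.sqrt_div (by positivity)]
      have e2 : Real.sqrt ((1 - α) * (1 - (M : ℝ) / N))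
          = Real.sqrt (((N:ℝ) - M) * (1 - α)) / Real.sqrt N := by
        have eq : (1 - α) * (1 - (M : ℝ) / N) = (((N:ℝ) - M) * (1 - α)) / N := by
          field_simp
        rw [eq, Real.sqrt_div (by nlinarith)]
      rw [e1, e2, ← add_div, one_div, inv_mul_eq_div,
        div_le_div_iff_of_pos_right hsqN]
      linarith
    calc (1 / Real.sqrt N) * ‖∑ z : Fin N, (Real.sqrt (p z) : ℂ) * u z‖
        ≤ (1 / Real.sqrt N) * (S1 + S2) := by
          apply mul_le_mul_of_nonneg_left habs (by positivity)
      _ ≤ _ := key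
  have hRnn : 0 ≤ Real.sqrt (α * M / N) + Real.sqrt ((1 - α) * (1 - (M : ℝ) / N)) := by
    positivity
  exact pow_le_pow_left₀ (norm_nonneg _) hmain 2
end
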